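/- arXiv:1211.2301 — 7 statements merged into one kernel-verified Lean document; each statement's English description precedes it below -/
import Mathlib

section
/- Let e be a transitive relation on a set E. Then e is square-free if and only if every regular closed subset of e is clopen. -/
/-- A binary relation (as a set of pairs) is transitive. -/
def TransRel {E : Type*} (a : Set (E × E)) : Prop :=
  ∀ x y z : E, (x, y) ∈ a → (y, z) ∈ a → (x, z) ∈ a

/-- The transitive closure of a set of pairs. -/
def tcl {E : Type*} (a : Set (E × E)) : Set (E × E) :=
  {p | Relation.TransGen (fun u v => (u, v) ∈ a) p.1 p.2}

/-- The interior of `a` relative to `e`. -/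
def tint {E : Type*} (e a : Set (E × E)) : Set (E × E) :=
  e \ tcl (e \ a)

/-- `a` is a closed subset of `e`. -/
def IsClosedIn {E : Type*} (e a : Set (E × E)) : Prop :=
  a ⊆ e ∧ TransRel a

/-- `a` is an open subset of `e`. -/
def IsOpenIn {E : Type*} (e a : Set (E × E)) : Prop :=
  a ⊆ e ∧ TransRel (e \ a)

/-- `a` is a clopen subset of `e`. -/
def IsClopenIn {E : Type*} (e a : Set (E × E)) : Prop :=
  a ⊆ e ∧ TransRel a ∧ TransRel (e \ a)

/-- `a` is a regular closed subset of `e`. -/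
def RegClosed {E : Type*} (e a : Set (E × E)) : Prop :=
  a ⊆ e ∧ a = tcl (tint e a)

/-- The reflexive preordering `x ⊴ y` associated with `e`. -/
def rle {E : Type*} (e : Set (E × E)) (x y : E) : Prop :=
  (x, y) ∈ e ∨ x = y

/-- `x ≡ y`: `x ⊴ y` and `y ⊴ x`. -/
def eqv {E : Type*} (e : Set (E × E)) (x y : E) : Prop :=
  rle e x y ∧ rle e y x

/-- `e` is square-free. -/
def SqFree {E : Type*} (e : Set (E × E)) : Prop :=
  ∀ a b x y : E, (a, b) ∈ e → rle e a x → rle e x b → rle e a y → rle e y b →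
    rle e x y ∨ rle e y x

/-- The interval `[a,b] = {x | a ⊴ x ⊴ b}`. -/
def cce {E : Type*} (e : Set (E × E)) (a b : E) : Set E :=
  {x | rle e a x ∧ rle e x b}

/-- `(a,b,U) ∈ F(e)`. -/
def Ftriple {E : Type*} (e : Set (E × E)) (a b : E) (U : Set E) : Prop :=
  (a, b) ∈ e ∧ U ⊆ cce e a b ∧ (a ≠ b → a ∉ U ∧ b ∈ U)

/-- The clopen set `⟨a,b,U⟩ = e ∩ (({a} ∪ Uᶜ) × ({b} ∪ U))`. -/
def pji {E : Type*} (e : Set (E × E)) (a b : E) (U : Set E) : Set (E × E) :=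
  e ∩ ((({a} : Set E) ∪ (cce e a b \ U)) ×ˢ (({b} : Set E) ∪ U))

/-- The set `p₋` associated with `p = ⟨a,b,U⟩`: if `a ≠ b` it is
`p \ ([a] × [b])`, and if `a = b` it is `p \ {(a,a)}`. -/
def pminus {E : Type*} (e : Set (E × E)) (a b : E) (U : Set E) : Set (E × E) :=
  {z ∈ pji e a b U | ¬ ((a ≠ b ∧ eqv e z.1 a ∧ eqv e z.2 b) ∨ (a = b ∧ z = (a, a)))}

lemma tcl_transrel {E : Type*} (a : Set (E × E)) : TransRel (tcl a) := by
  intro x y z hxy hyz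
  exact Relation.TransGen.trans hxy hyz

lemma subset_tcl {E : Type*} (a : Set (E × E)) : a ⊆ tcl a := by
  rintro ⟨x, y⟩ h
  exact Relation.TransGen.single h

lemma tcl_min {E : Type*} {a T : Set (E × E)} (h : a ⊆ T) (hT : TransRel T) :
    tcl a ⊆ T := by
  rintro ⟨x, y⟩ hx
  simp only [tcl, Set.mem_setOf_eq] at hx
  induction hx with
  | single h' => exact h h'
  | tail h₁ h₂ ih => exact hT _ _ _ ih (h h₂)

lemma rle_trans {E : Type*} {e : Set (E × E)} (he : TransRel e) {x y z : E}
    (h1 : rle e x y) (h2 : rle e y z) : rle e x z := by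
  rcases h1 with h1 | rfl
  · rcases h2 with h2 | rfl
    · exact Or.inl (he _ _ _ h1 h2)
    · exact Or.inl h1
  · exact h2

/-- `e` is square-free iff every regular closed subset of `e` is clopen. -/
theorem squareFree_iff_regClosed_clopen {E : Type*} (e : Set (E × E)) (he : TransRel e) :
    SqFree e ↔ ∀ a : Set (E × E), RegClosed e a → IsClopenIn e a := by
  constructor
  · intro hsf a ha
    obtain ⟨hae, haeq⟩ := ha
    have hatrans : TransRel a := by rw [haeq]; exact tcl_transrel _
    refine ⟨hae, hatrans, ?_⟩
    intro x y z hxy hyz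
    by_contra hxz'
    have hxze : (x, z) ∈ e := he _ _ _ hxy.1 hyz.1
    have hxz : (x, z) ∈ a := by
      by_contra h; exact hxz' ⟨hxze, h⟩
    have hbtrans : TransRel (tcl (e \ a)) := tcl_transrel _
    have hca : tint e a ⊆ a := by
      intro p hp
      by_contra h
      exact hp.2 (subset_tcl _ ⟨hp.1, h⟩)
    have hce : tint e a ⊆ e := fun p hp => hp.1
    have htcl_c_e : tcl (tint e a) ⊆ e := tcl_min hce he
    have key : ∀ w, Relation.TransGen (fun u v => (u, v) ∈ tint e a) x w →
        rle e y w → ((w, z) ∈ a ∨ w = z) → False := by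
      intro w hw
      induction hw with
      | @single w' h' =>
        intro hyw hwz
        rcases hyw with hyw | rfl
        · have hywa : (y, w') ∉ a := by
            intro h
            rcases hwz with h2 | rfl
            · exact hyz.2 (hatrans _ _ _ h h2)
            · exact hyz.2 h
          have hywb : (y, w') ∈ tcl (e \ a) := subset_tcl _ ⟨hyw, hywa⟩
          have hxyb : (x, y) ∈ tcl (e \ a) := subset_tcl _ hxy
          exact h'.2 (hbtrans _ _ _ hxyb hywb)
        · exact hxy.2 (hca h')
      | @tail v w' h₁ h₂ ih =>
        intro hyw hwz
        have hvz : (v, z) ∈ a ∨ v = z := by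
          rcases hwz with h2 | rfl
          · exact Or.inl (hatrans _ _ _ (hca h₂) h2)
          · exact Or.inl (hca h₂)
        have hyv : ¬ rle e y v := fun h => ih h hvz
        have hxv_tcl : (x, v) ∈ tcl (tint e a) := h₁
        have hxv_e : (x, v) ∈ e := htcl_c_e hxv_tcl
        have hcomp : rle e y v ∨ rle e v y := by
          refine hsf x z y v hxze (Or.inl hxy.1) (Or.inl hyz.1) (Or.inl hxv_e) ?_
          rcases hvz with h | rfl
          · exact Or.inl (hae h)
          · exact Or.inr rfl
        have hvy : rle e v y := hcomp.resolve_left hyv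
        rcases hvy with hvye | rfl
        · have hvya : (v, y) ∉ a := by
            intro h
            have hxva : (x, v) ∈ a := by rw [haeq]; exact hxv_tcl
            exact hxy.2 (hatrans _ _ _ hxva h)
          have hvyb : (v, y) ∈ tcl (e \ a) := subset_tcl _ ⟨hvye, hvya⟩
          rcases hyw with hyw | rfl
          · have hywa : (y, w') ∉ a := by
              intro h
              rcases hwz with h2 | rfl
              · exact hyz.2 (hatrans _ _ _ h h2)
              · exact hyz.2 h
            have hywb : (y, w') ∈ tcl (e \ a) := subset_tcl _ ⟨hyw, hywa⟩
            exact h₂.2 (hbtrans _ _ _ hvyb hywb)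
          · exact h₂.2 hvyb
        · exact hyv (Or.inr rfl)
    have hxz_tcl : Relation.TransGen (fun u v => (u, v) ∈ tint e a) x z := by
      have : (x, z) ∈ tcl (tint e a) := by rw [← haeq]; exact hxz
      exact this
    exact key z hxz_tcl (Or.inl hyz.1) (Or.inr rfl)
  · intro H
    by_contra hsf
    unfold SqFree at hsf
    push_neg at hsf
    obtain ⟨s, t, x, y, hst, hsx, hxt, hsy, hyt, hxy, hyx⟩ := hsf
    -- basic inequalities
    have hsnx : s ≠ x := by rintro rfl; exact hxy hsy
    have hxnt : x ≠ t := by rintro rfl; exact hyx hyt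
    have hsny : s ≠ y := by rintro rfl; exact hyx hsx
    have hynt : y ≠ t := by rintro rfl; exact hxy hxt
    have hsxe : (s, x) ∈ e := hsx.resolve_right hsnx
    have hxte : (x, t) ∈ e := hxt.resolve_right hxnt
    have hsye : (s, y) ∈ e := hsy.resolve_right hsny
    have hyte : (y, t) ∈ e := hyt.resolve_right hynt
    set u : Set (E × E) :=
      {p | p ∈ e ∧ ((rle e p.1 x ∧ eqv e p.2 x) ∨ (eqv e p.1 x ∧ rle e x p.2))} with hu
    have hue : u ⊆ e := fun p hp => hp.1
    have huopen : TransRel (e \ u) := by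
      intro p q r hpq hqr
      refine ⟨he _ _ _ hpq.1 hqr.1, ?_⟩
      rintro ⟨_, ⟨hpx, hrx⟩ | ⟨hpx, hxr⟩⟩
      · have hqx : rle e q x := rle_trans he (Or.inl hqr.1) hrx.1
        exact hqr.2 ⟨hqr.1, Or.inl ⟨hqx, hrx⟩⟩
      · have hxq : rle e x q := rle_trans he hpx.2 (Or.inl hpq.1)
        exact hpq.2 ⟨hpq.1, Or.inr ⟨hpx, hxq⟩⟩
    set T : Set (E × E) := {p | p ∈ e ∧ rle e p.1 x ∧ rle e x p.2} with hT
    have hTtrans : TransRel T := by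
      intro p q r hpq hqr
      exact ⟨he _ _ _ hpq.1 hqr.1, hpq.2.1, hqr.2.2⟩
    have huT : u ⊆ T := by
      rintro p ⟨hpe, ⟨hp1, hp2⟩ | ⟨hp1, hp2⟩⟩
      · exact ⟨hpe, hp1, hp2.2⟩
      · exact ⟨hpe, hp1.1, hp2⟩
    have haT : tcl u ⊆ T := tcl_min huT hTtrans
    have hregc : RegClosed e (tcl u) := by
      refine ⟨tcl_min hue he, ?_⟩
      have h1 : u ⊆ tint e (tcl u) := by
        intro p hp
        refine ⟨hue hp, ?_⟩
        intro hpc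
        have hsub : tcl (e \ tcl u) ⊆ e \ u := by
          refine tcl_min ?_ huopen
          intro q hq
          exact ⟨hq.1, fun h => hq.2 (subset_tcl _ h)⟩
        exact (hsub hpc).2 hp
      have h2 : tint e (tcl u) ⊆ tcl u := by
        intro p hp
        by_contra h
        exact hp.2 (subset_tcl _ ⟨hp.1, h⟩)
      apply Set.Subset.antisymm
      · exact tcl_min (fun p hp => subset_tcl _ (h1 hp)) (tcl_transrel _)
      · exact tcl_min h2 (tcl_transrel u)
    obtain ⟨_, _, hcompl⟩ := H (tcl u) hregc
    have hsxu : (s, x) ∈ u := ⟨hsxe, Or.inl ⟨hsx, Or.inr rfl, Or.inr rfl⟩⟩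
    have hxtu : (x, t) ∈ u := ⟨hxte, Or.inr ⟨⟨Or.inr rfl, Or.inr rfl⟩, hxt⟩⟩
    have hsta : (s, t) ∈ tcl u :=
      Relation.TransGen.head (b := x) hsxu (Relation.TransGen.single hxtu)
    have hsy' : (s, y) ∈ e \ tcl u := by
      refine ⟨hsye, fun h => ?_⟩
      exact hxy (haT h).2.2
    have hyt' : (y, t) ∈ e \ tcl u := by
      refine ⟨hyte, fun h => ?_⟩
      exact hyx (haT h).2.1
    exact (hcompl _ _ _ hsy' hyt').2 hsta
end

section
/- Let e be a transitive relation on a set E. Then e is square-free if and only if Clop(e) has the interpolation property: for all clopen subsets x₀, x₁, y₀, y₁ of e such that xᵢ ⊆ yⱼ for all i, j ∈ {0,1}, there exists a clopen subset z of e such that xᵢ ⊆ z ⊆ yᵢ for each i ∈ {0,1}. -/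
lemma mem_pji {E : Type*} {e : Set (E × E)} {a b : E} {U : Set E} {u v : E} :
    (u, v) ∈ pji e a b U ↔
      (u, v) ∈ e ∧ (u = a ∨ (u ∈ cce e a b ∧ u ∉ U)) ∧ (v = b ∨ v ∈ U) := by
  simp [pji, Set.mem_prod, Set.mem_diff, and_assoc]

lemma pji_clopen {E : Type*} {e : Set (E × E)} (he : TransRel e) {a b : E} {U : Set E}
    (hU : U ⊆ cce e a b) : IsClopenIn e (pji e a b U) := by
  refine ⟨Set.inter_subset_left, ?_, ?_⟩
  · intro u v w h1 h2
    rw [mem_pji] at h1 h2 ⊢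
    exact ⟨he _ _ _ h1.1 h2.1, h1.2.1, h2.2.2⟩
  · rintro u v w ⟨h1e, h1⟩ ⟨h2e, h2⟩
    refine ⟨he _ _ _ h1e h2e, fun hp => ?_⟩
    rw [mem_pji] at hp h1 h2
    push_neg at h1 h2
    have hv1 := h1 h1e hp.2.1
    have hvnU : v ∉ U := hv1.2
    have hav : rle e a v := by
      rcases hp.2.1 with rfl | ⟨hc, _⟩
      · exact Or.inl h1e
      · exact rle_trans he hc.1 (Or.inl h1e)
    have hvb : rle e v b := by
      rcases hp.2.2 with rfl | hw
      · exact Or.inl h2e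
      · exact rle_trans he (Or.inl h2e) (hU hw).2
    have hw2 := h2 h2e (Or.inr ⟨⟨hav, hvb⟩, hvnU⟩)
    rcases hp.2.2 with rfl | hw
    · exact hw2.1 rfl
    · exact hw2.2 hw

lemma clopen_compl {E : Type*} {e a : Set (E × E)} (h : IsClopenIn e a) :
    IsClopenIn e (e \ a) := by
  refine ⟨Set.diff_subset, h.2.2, ?_⟩
  rw [Set.diff_diff_cancel_left h.1]
  exact h.2.1

lemma tcl_subset_of_trans {E : Type*} {s t : Set (E × E)} (hs : s ⊆ t) (ht : TransRel t) :
    tcl s ⊆ t := by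
  rintro ⟨u, v⟩ h
  simp only [tcl, Set.mem_setOf_eq] at h
  induction h with
  | single h => exact hs h
  | tail _ h2 ih => exact ht _ _ _ ih (hs h2)


/-- `e` is square-free iff `Clop(e)` has the interpolation property. -/
theorem squareFree_iff_interpolation {E : Type*} (e : Set (E × E)) (he : TransRel e) :
    SqFree e ↔
      ∀ x₀ x₁ y₀ y₁ : Set (E × E),
        IsClopenIn e x₀ → IsClopenIn e x₁ → IsClopenIn e y₀ → IsClopenIn e y₁ →
        x₀ ⊆ y₀ → x₀ ⊆ y₁ → x₁ ⊆ y₀ → x₁ ⊆ y₁ →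
        ∃ z, IsClopenIn e z ∧ x₀ ⊆ z ∧ x₁ ⊆ z ∧ z ⊆ y₀ ∧ z ⊆ y₁ := by
  constructor
  · -- square-free → interpolation
    intro hsf x₀ x₁ y₀ y₁ hx₀ hx₁ hy₀ hy₁ h00 h01 h10 h11
    set r : E → E → Prop := fun u v => (u, v) ∈ x₀ ∪ x₁ with hr
    set z : Set (E × E) := tcl (x₀ ∪ x₁) with hz
    have hmemz : ∀ u v : E, (u, v) ∈ z ↔ Relation.TransGen r u v := fun u v => Iff.rfl
    have hze : z ⊆ e := tcl_subset_of_trans (Set.union_subset hx₀.1 hx₁.1) he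
    have hzy₀ : z ⊆ y₀ := tcl_subset_of_trans (Set.union_subset h00 h10) hy₀.2.1
    have hzy₁ : z ⊆ y₁ := tcl_subset_of_trans (Set.union_subset h01 h11) hy₁.2.1
    have hx₀z : x₀ ⊆ z := fun p hp => Relation.TransGen.single (Or.inl hp)
    have hx₁z : x₁ ⊆ z := fun p hp => Relation.TransGen.single (Or.inr hp)
    have hztrans : TransRel z := fun u v w h1 h2 => Relation.TransGen.trans h1 h2
    -- key lemma for openness
    have key : ∀ w u, Relation.TransGen r u w → ∀ v, (u, v) ∈ e → (u, v) ∉ z →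
        (v, w) ∈ e → (v, w) ∉ z → False := by
      intro w u h
      induction h using Relation.TransGen.head_induction_on with
      | single hedge =>
        rename_i u'
        intro v huv h1 hvw h2
        rcases hedge with hj | hj
        · exact (hx₀.2.2 _ _ _ ⟨huv, fun h => h1 (hx₀z h)⟩
            ⟨hvw, fun h => h2 (hx₀z h)⟩).2 hj
        · exact (hx₁.2.2 _ _ _ ⟨huv, fun h => h1 (hx₁z h)⟩
            ⟨hvw, fun h => h2 (hx₁z h)⟩).2 hj
      | head hedge hmw IH =>
        rename_i u' m
        intro v huv h1 hvw h2
        have hum : (u', m) ∈ e := (Set.union_subset hx₀.1 hx₁.1) hedge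
        have hmwz : (m, w) ∈ z := hmw
        have hmwe : (m, w) ∈ e := hze hmwz
        have huw : (u', w) ∈ e := he _ _ _ hum hmwe
        rcases hsf u' w v m huw (Or.inl huv) (Or.inl hvw) (Or.inl hum) (Or.inl hmwe)
          with hvm | hmv
        · -- rle v m
          rcases hvm with hvm | rfl
          · have hvmz : (v, m) ∉ z := fun hq =>
              h2 (Relation.TransGen.trans hq hmwz)
            rcases hedge with hj | hj
            · exact (hx₀.2.2 _ _ _ ⟨huv, fun h => h1 (hx₀z h)⟩
                ⟨hvm, fun h => hvmz (hx₀z h)⟩).2 hj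
            · exact (hx₁.2.2 _ _ _ ⟨huv, fun h => h1 (hx₁z h)⟩
                ⟨hvm, fun h => hvmz (hx₁z h)⟩).2 hj
          · exact h1 (Relation.TransGen.single hedge)
        · -- rle m v
          rcases hmv with hmv | rfl
          · have hmvz : (m, v) ∉ z := fun hq =>
              h1 (Relation.TransGen.head hedge hq)
            exact IH v hmv hmvz hvw h2
          · exact h1 (Relation.TransGen.single hedge)
    refine ⟨z, ⟨hze, hztrans, ?_⟩, hx₀z, hx₁z, hzy₀, hzy₁⟩
    rintro u v w ⟨h1e, h1z⟩ ⟨h2e, h2z⟩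
    exact ⟨he _ _ _ h1e h2e, fun hzw => key w u hzw v h1e h1z h2e h2z⟩
  · -- interpolation → square-free
    intro hint a b x y hab hax hxb hay hyb
    by_contra hcon
    push_neg at hcon
    obtain ⟨hxy, hyx⟩ := hcon
    have hax' : (a, x) ∈ e := by
      rcases hax with h | rfl
      · exact h
      · exact absurd hay hxy
    have hxb' : (x, b) ∈ e := by
      rcases hxb with h | rfl
      · exact h
      · exact absurd hyb hyx
    have hay' : (a, y) ∈ e := by
      rcases hay with h | rfl
      · exact h
      · exact absurd hax hyx
    have hyb' : (y, b) ∈ e := by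
      rcases hyb with h | rfl
      · exact h
      · exact absurd hxb hxy
    set U0 : Set E := {t | eqv e t x} with hU0def
    set U1 : Set E := {t | eqv e t b} with hU1def
    set W : Set E := {t | t ∈ cce e y b ∧ (rle e x t ∨ rle e b t)} with hWdef
    set U2 : Set E := {t | eqv e t y} with hU2def
    set x0 := pji e a x U0 with hx0def
    set x1 := pji e x b U1 with hx1def
    set q0 := pji e y b W with hq0def
    set q1 := pji e a y U2 with hq1def
    have hx0cl : IsClopenIn e x0 :=
      pji_clopen he (fun t ht => ⟨rle_trans he hax ht.2, ht.1⟩)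
    have hx1cl : IsClopenIn e x1 :=
      pji_clopen he (fun t ht => ⟨rle_trans he hxb ht.2, ht.1⟩)
    have hq0cl : IsClopenIn e q0 := pji_clopen he (fun t ht => ht.1)
    have hq1cl : IsClopenIn e q1 :=
      pji_clopen he (fun t ht => ⟨rle_trans he hay ht.2, ht.1⟩)
    have hax0 : (a, x) ∈ x0 := mem_pji.mpr ⟨hax', Or.inl rfl, Or.inl rfl⟩
    have hxb1 : (x, b) ∈ x1 := mem_pji.mpr ⟨hxb', Or.inl rfl, Or.inl rfl⟩
    have hyq0 : (y, b) ∈ q0 := mem_pji.mpr ⟨hyb', Or.inl rfl, Or.inl rfl⟩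
    have haq1 : (a, y) ∈ q1 := mem_pji.mpr ⟨hay', Or.inl rfl, Or.inl rfl⟩
    -- containments
    have h00 : x0 ⊆ e \ q0 := by
      rintro ⟨u, v⟩ h
      refine ⟨hx0cl.1 h, fun hq => ?_⟩
      rw [mem_pji] at h hq
      have hvx : rle e v x := by
        rcases h.2.2 with rfl | hv
        · exact Or.inr rfl
        · exact hv.1
      rcases hq.2.2 with rfl | hv
      · exact hyx (rle_trans he hyb hvx)
      · exact hyx (rle_trans he (rle_trans he hv.1.1 hvx) (Or.inr rfl))
    have h10 : x1 ⊆ e \ q0 := by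
      rintro ⟨u, v⟩ h
      refine ⟨hx1cl.1 h, fun hq => ?_⟩
      rw [mem_pji] at h hq
      have hxu : rle e x u := by
        rcases h.2.1 with rfl | hu
        · exact Or.inr rfl
        · exact hu.1.1
      rcases hq.2.1 with rfl | ⟨hu, hnW⟩
      · exact hxy hxu
      · exact hnW ⟨hu, Or.inl hxu⟩
    have h01 : x0 ⊆ e \ q1 := by
      rintro ⟨u, v⟩ h
      refine ⟨hx0cl.1 h, fun hq => ?_⟩
      rw [mem_pji] at h hq
      have hxv : rle e x v := by
        rcases h.2.2 with rfl | hv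
        · exact Or.inr rfl
        · exact hv.2
      rcases hq.2.2 with rfl | hv
      · exact hxy hxv
      · exact hxy (rle_trans he hxv hv.1)
    have h11 : x1 ⊆ e \ q1 := by
      rintro ⟨u, v⟩ h
      refine ⟨hx1cl.1 h, fun hq => ?_⟩
      rw [mem_pji] at h hq
      have hbv : rle e b v := by
        rcases h.2.2 with rfl | hv
        · exact Or.inr rfl
        · exact hv.2
      rcases hq.2.2 with rfl | hv
      · exact hxy (rle_trans he hxb hbv)
      · exact hxy (rle_trans he hxb (rle_trans he hbv hv.1))
    obtain ⟨z, hzcl, h0z, h1z, hzy0, hzy1⟩ :=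
      hint x0 x1 (e \ q0) (e \ q1) hx0cl hx1cl (clopen_compl hq0cl) (clopen_compl hq1cl)
        h00 h01 h10 h11
    have habz : (a, b) ∈ z := hzcl.2.1 _ _ _ (h0z hax0) (h1z hxb1)
    have hayz : (a, y) ∉ z := fun h => (hzy1 h).2 haq1
    have hybz : (y, b) ∉ z := fun h => (hzy0 h).2 hyq0
    exact (hzcl.2.2 _ _ _ ⟨hay', hayz⟩ ⟨hyb', hybz⟩).2 habz
end

section
/- Let e be a transitive relation on a set E. A regular closed subset p of e is a completely join-irreducible element of Reg(e) — that is, there exists a regular closed set p' ⊊ p such that every regular closed x ⊊ p satisfies x ⊆ p' — if and only if p = ⟨a,b,U⟩ for some triple (a,b,U) ∈ F(e). -/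
namespace PjiAux

variable {E : Type*} {e : Set (E × E)}

lemma subset_tcl (a : Set (E × E)) : a ⊆ tcl a :=
  fun _ hz => Relation.TransGen.single hz

lemma tcl_subset_of_trans {a b : Set (E × E)} (hab : a ⊆ b) (hb : TransRel b) :
    tcl a ⊆ b := by
  rintro ⟨x, y⟩ h
  have h' : Relation.TransGen (fun u v => (u, v) ∈ a) x y := h
  clear h
  induction h' with
  | single h1 => exact hab h1
  | tail _ h2 ih => exact hb _ _ _ ih (hab h2)

lemma tcl_mono {a b : Set (E × E)} (hab : a ⊆ b) : tcl a ⊆ tcl b :=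
  fun _ hz => Relation.TransGen.mono (fun _ _ h => hab h) _ _ hz

lemma tcl_trans (a : Set (E × E)) : TransRel (tcl a) :=
  fun _ _ _ h1 h2 => Relation.TransGen.trans h1 h2

lemma tcl_self {a : Set (E × E)} (h : TransRel a) : tcl a = a :=
  Set.Subset.antisymm (tcl_subset_of_trans (fun _ hz => hz) h) (subset_tcl a)

lemma tint_subset {a : Set (E × E)} : tint e a ⊆ a := by
  intro z hz
  by_contra hc
  exact hz.2 (subset_tcl _ ⟨hz.1, hc⟩)

lemma tint_subset_left {a : Set (E × E)} : tint e a ⊆ e := fun _ hz => hz.1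

lemma diff_tint (he : TransRel e) (a : Set (E × E)) : e \ tint e a = tcl (e \ a) := by
  have h1 : tcl (e \ a) ⊆ e := tcl_subset_of_trans Set.diff_subset he
  ext z
  simp only [tint, Set.mem_diff]
  constructor
  · rintro ⟨hz, hn⟩
    by_contra hc
    exact hn ⟨hz, hc⟩
  · intro h
    exact ⟨h1 h, fun hn => hn.2 h⟩

lemma trans_diff_tint (he : TransRel e) (a : Set (E × E)) : TransRel (e \ tint e a) := by
  rw [diff_tint he a]; exact tcl_trans _

lemma open_subset_tint {u v : Set (E × E)} (hue : u ⊆ e) (hou : TransRel (e \ u))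
    (huv : u ⊆ v) : u ⊆ tint e v := by
  intro z hz
  refine ⟨hue hz, fun hc => ?_⟩
  have h : tcl (e \ v) ⊆ e \ u :=
    tcl_subset_of_trans (Set.diff_subset_diff_right huv) hou
  exact (h hc).2 hz

lemma regClosed_tcl_tint (he : TransRel e) (X : Set (E × E)) :
    RegClosed e (tcl (tint e X)) := by
  refine ⟨tcl_subset_of_trans tint_subset_left he, ?_⟩
  apply Set.Subset.antisymm
  · exact tcl_mono (open_subset_tint tint_subset_left (trans_diff_tint he X) (subset_tcl _))
  · exact tcl_subset_of_trans tint_subset (tcl_trans _)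

lemma regClosed_of_clopen (he : TransRel e) {a : Set (E × E)} (h : IsClopenIn e a) :
    RegClosed e a := by
  obtain ⟨h1, h2, h3⟩ := h
  refine ⟨h1, ?_⟩
  have ht : tint e a = a := by
    rw [tint, tcl_self h3, Set.diff_diff_cancel_left h1]
  rw [ht, tcl_self h2]

lemma rle_refl (x : E) : rle e x x := Or.inr rfl

lemma eqv_refl (x : E) : eqv e x x := ⟨rle_refl x, rle_refl x⟩

lemma rle_trans_mem (he : TransRel e) {x y z : E} (h : rle e x y) (h2 : (y, z) ∈ e) :
    (x, z) ∈ e := by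
  rcases h with h | rfl
  · exact he _ _ _ h h2
  · exact h2

lemma mem_trans_rle (he : TransRel e) {x y z : E} (h : (x, y) ∈ e) (h2 : rle e y z) :
    (x, z) ∈ e := by
  rcases h2 with h2 | rfl
  · exact he _ _ _ h h2
  · exact h

lemma rle_trans (he : TransRel e) {x y z : E} (h : rle e x y) (h2 : rle e y z) :
    rle e x z := by
  rcases h2 with h2 | rfl
  · exact Or.inl (rle_trans_mem he h h2)
  · exact h

lemma mem_pji {a b : E} {U : Set E} {s t : E} :
    (s, t) ∈ pji e a b U ↔ (s, t) ∈ e ∧ (s = a ∨ s ∈ cce e a b \ U) ∧ (t = b ∨ t ∈ U) :=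
  Iff.rfl

lemma left_rle {a b : E} {U : Set E} {s : E} (h : s = a ∨ s ∈ cce e a b \ U) : rle e a s := by
  rcases h with rfl | h
  · exact rle_refl s
  · exact h.1.1

lemma right_rle {a b : E} {U : Set E} {t : E} (hU : U ⊆ cce e a b) (h : t = b ∨ t ∈ U) :
    rle e t b := by
  rcases h with rfl | h
  · exact rle_refl t
  · exact (hU h).2

lemma sides_disjoint {a b : E} {U : Set E} (hF : Ftriple e a b U) (hab : a ≠ b) {s : E}
    (h1 : s = a ∨ s ∈ cce e a b \ U) (h2 : s = b ∨ s ∈ U) : False := by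
  obtain ⟨haU, hbU⟩ := hF.2.2 hab
  rcases h1 with rfl | hs <;> rcases h2 with h3 | h3
  · exact hab h3
  · exact haU h3
  · exact (h3 ▸ hs).2 hbU
  · exact hs.2 h3

lemma pji_clopen (he : TransRel e) {a b : E} {U : Set E} (hF : Ftriple e a b U) :
    IsClopenIn e (pji e a b U) := by
  refine ⟨Set.inter_subset_left, ?_, ?_⟩
  · rintro x y z h1 h2
    rw [mem_pji] at h1 h2 ⊢
    exact ⟨he _ _ _ h1.1 h2.1, h1.2.1, h2.2.2⟩
  · rintro x y z h1 h2
    refine ⟨he _ _ _ h1.1 h2.1, fun hc => ?_⟩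
    rw [mem_pji] at hc
    have hay : rle e a y := Or.inl (rle_trans_mem he (left_rle hc.2.1) h1.1)
    have hyb : rle e y b := Or.inl (mem_trans_rle he h2.1 (right_rle hF.2.1 hc.2.2))
    by_cases hyU : y ∈ U
    · exact h1.2 (mem_pji.2 ⟨h1.1, hc.2.1, Or.inr hyU⟩)
    · exact h2.2 (mem_pji.2 ⟨h2.1, Or.inr ⟨⟨hay, hyb⟩, hyU⟩, hc.2.2⟩)

lemma claimA (he : TransRel e) {a b : E} {U : Set E} (hF : Ftriple e a b U) (hab : a ≠ b)
    {x : Set (E × E)} (hx : RegClosed e x) (hxp : x ⊆ pji e a b U)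
    {c d : E} (hcd : (c, d) ∈ tint e x) (hca : rle e c a) (hbd : rle e b d) :
    pji e a b U ⊆ x := by
  have hTx : e \ tcl (e \ x) ⊆ x := by
    conv_rhs => rw [hx.2]
    exact subset_tcl _
  rintro ⟨s, t⟩ hst
  rw [mem_pji] at hst
  obtain ⟨hste, hs, ht⟩ := hst
  have has : rle e a s := left_rle hs
  have htb : rle e t b := right_rle hF.2.1 ht
  have key : (s, t) ∉ tcl (e \ x) := by
    intro hT
    have hct : (c, t) ∈ tcl (e \ x) := by
      by_cases hcs : c = s
      · exact hcs ▸ hT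
      · have hcse : (c, s) ∈ e := by
          rcases rle_trans he hca has with h | h
          · exact h
          · exact absurd h hcs
        have hcsT : (c, s) ∈ tcl (e \ x) := by
          by_contra hcn
          have hm := hxp (hTx ⟨hcse, hcn⟩)
          rw [mem_pji] at hm
          exact sides_disjoint hF hab hs hm.2.2
        exact tcl_trans _ _ _ _ hcsT hT
    by_cases htd : t = d
    · exact hcd.2 (htd ▸ hct)
    · have htde : (t, d) ∈ e := by
        rcases rle_trans he htb hbd with h | h
        · exact h
        · exact absurd h htd
      have htdT : (t, d) ∈ tcl (e \ x) := by
        by_contra htn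
        have hm := hxp (hTx ⟨htde, htn⟩)
        rw [mem_pji] at hm
        exact sides_disjoint hF hab hm.2.1 ht
      exact hcd.2 (tcl_trans _ _ _ _ hct htdT)
  exact hTx ⟨hste, key⟩

lemma claimA' (he : TransRel e) {a : E} {U : Set E} (hF : Ftriple e a a U)
    {x : Set (E × E)} (hx : RegClosed e x) (hxp : x ⊆ pji e a a U)
    (hcd : (a, a) ∈ tint e x) : pji e a a U ⊆ x := by
  have hTx : e \ tcl (e \ x) ⊆ x := by
    conv_rhs => rw [hx.2]
    exact subset_tcl _
  rintro ⟨s, t⟩ hst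
  rw [mem_pji] at hst
  obtain ⟨hste, hs, ht⟩ := hst
  have key : (s, t) ∉ tcl (e \ x) := by
    intro hT
    have hat : (a, t) ∈ tcl (e \ x) := by
      by_cases has' : a = s
      · exact has' ▸ hT
      · have hase : (a, s) ∈ e := by
          rcases left_rle hs with h | h
          · exact h
          · exact absurd h has'
        have hasT : (a, s) ∈ tcl (e \ x) := by
          by_contra hn
          have hm := hxp (hTx ⟨hase, hn⟩)
          rw [mem_pji] at hm
          rcases hm.2.2 with h1 | h1
          · exact has' h1.symm
          · rcases hs with h2 | h2
            · exact has' h2.symm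
            · exact h2.2 h1
        exact tcl_trans _ _ _ _ hasT hT
    by_cases hta : t = a
    · exact hcd.2 (hta ▸ hat)
    · have htae : (t, a) ∈ e := by
        rcases right_rle hF.2.1 ht with h | h
        · exact h
        · exact absurd h hta
      have htaT : (t, a) ∈ tcl (e \ x) := by
        by_contra hn
        have hm := hxp (hTx ⟨htae, hn⟩)
        rw [mem_pji] at hm
        rcases hm.2.1 with h1 | h1
        · exact hta h1
        · rcases ht with h2 | h2
          · exact hta h2
          · exact h1.2 h2
      exact hcd.2 (tcl_trans _ _ _ _ hat htaT)
  exact hTx ⟨hste, key⟩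

lemma not_mem_tcl_pminus (he : TransRel e) {a b : E} {U : Set E} (hF : Ftriple e a b U) :
    (a, b) ∉ tcl (pminus e a b U) := by
  intro h
  have targets : ∀ {y z : E},
      Relation.TransGen (fun u v => (u, v) ∈ pminus e a b U) y z → z = b ∨ z ∈ U := by
    intro y z hz
    induction hz with
    | single h1 => exact (mem_pji.1 h1.1).2.2
    | tail _ h2 _ => exact (mem_pji.1 h2.1).2.2
  have h' : Relation.TransGen (fun u v => (u, v) ∈ pminus e a b U) a b := h
  cases h' with
  | single h1 =>
      refine h1.2 ?_
      by_cases hab : a = b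
      · subst hab
        exact Or.inr ⟨rfl, rfl⟩
      · exact Or.inl ⟨hab, eqv_refl a, eqv_refl b⟩
  | @tail y _ hy h2 =>
      have hside := (mem_pji.1 h2.1).2.1
      have htar := targets hy
      by_cases hab : a = b
      · subst hab
        have hya : y = a := by
          rcases hside with h3 | h3
          · exact h3
          · rcases htar with h4 | h4
            · exact h4
            · exact absurd h4 h3.2
        subst hya
        exact h2.2 (Or.inr ⟨rfl, rfl⟩)
      · exact sides_disjoint hF hab hside htar

end PjiAux

/-- a regular closed subset `p` of `e` is completely join-irreducible in
`Reg(e)` iff `p = ⟨a,b,U⟩` for some `(a,b,U) ∈ F(e)`. -/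
theorem completelyJoinIrreducible_iff_pji {E : Type*} (e : Set (E × E)) (he : TransRel e)
    (p : Set (E × E)) (hp : RegClosed e p) :
    (∃ p', RegClosed e p' ∧ p' ⊂ p ∧ ∀ x, RegClosed e x → x ⊂ p → x ⊆ p') ↔
      ∃ (a b : E) (U : Set E), Ftriple e a b U ∧ p = pji e a b U := by
  constructor
  · rintro ⟨p', hp', hlt, hmax⟩
    by_contra hcon
    push_neg at hcon
    have hTp : e \ tcl (e \ p) ⊆ p := by
      conv_rhs => rw [hp.2]
      exact PjiAux.subset_tcl _
    have hsub : tint e p ⊆ p' := by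
      rintro ⟨a, b⟩ hab
      set U : Set E := {b} ∪ {t | t ∈ cce e a b ∧ t ≠ a ∧ (a, t) ∉ tcl (e \ p)} with hU
      have hFt : Ftriple e a b U := by
        refine ⟨hab.1, ?_, fun hne => ⟨?_, by rw [hU]; exact Or.inl rfl⟩⟩
        · rintro t ht
          rw [hU] at ht
          rcases ht with h | ht
          · rw [Set.mem_singleton_iff] at h; subst h
            exact ⟨Or.inl hab.1, PjiAux.rle_refl _⟩
          · exact ht.1
        · intro haU
          rw [hU] at haU
          rcases haU with h | h
          · rw [Set.mem_singleton_iff] at h; exact hne h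
          · exact h.2.1 rfl
      have hq_sub : pji e a b U ⊆ p := by
        rintro ⟨s, t⟩ hst
        rw [PjiAux.mem_pji] at hst
        obtain ⟨hste, hs, ht⟩ := hst
        refine hTp ⟨hste, fun hT => ?_⟩
        have hat : (a, t) ∉ tcl (e \ p) := by
          rcases ht with rfl | htU
          · exact hab.2
          · rw [hU] at htU
            rcases htU with h | h
            · rw [Set.mem_singleton_iff] at h; subst h; exact hab.2
            · exact h.2.2
        rcases hs with rfl | hs
        · exact hat hT
        · have hcase : s = a ∨ (a, s) ∈ tcl (e \ p) := by
            by_cases h1 : s = a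
            · exact Or.inl h1
            · right; by_contra h2
              exact hs.2 (by rw [hU]; exact Or.inr ⟨hs.1, h1, h2⟩)
          rcases hcase with rfl | hsa
          · exact hat hT
          · exact hat (PjiAux.tcl_trans _ _ _ _ hsa hT)
      have hq_rc : RegClosed e (pji e a b U) :=
        PjiAux.regClosed_of_clopen he (PjiAux.pji_clopen he hFt)
      have hne : pji e a b U ≠ p := fun h => hcon a b U hFt h.symm
      have hql : pji e a b U ⊆ p' :=
        hmax _ hq_rc (ssubset_of_subset_of_ne hq_sub hne)
      exact hql ⟨hab.1, Or.inl rfl, Or.inl rfl⟩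
    have hpp' : p ⊆ p' := by
      conv_lhs => rw [hp.2]
      refine PjiAux.tcl_subset_of_trans hsub ?_
      rw [hp'.2]
      exact PjiAux.tcl_trans _
    exact hlt.not_subset hpp'
  · rintro ⟨a, b, U, hF, rfl⟩
    refine ⟨tcl (tint e (pminus e a b U)), PjiAux.regClosed_tcl_tint he _, ?_, ?_⟩
    · have hptrans : TransRel (pji e a b U) := (PjiAux.pji_clopen he hF).2.1
      have hsub : tcl (tint e (pminus e a b U)) ⊆ pji e a b U :=
        PjiAux.tcl_subset_of_trans (fun z hz => (PjiAux.tint_subset hz).1) hptrans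
      refine ssubset_of_subset_of_ne hsub (fun hEq => ?_)
      have hmem : (a, b) ∈ pji e a b U := ⟨hF.1, Or.inl rfl, Or.inl rfl⟩
      have h1 : (a, b) ∈ tcl (tint e (pminus e a b U)) := by rw [hEq]; exact hmem
      exact PjiAux.not_mem_tcl_pminus he hF (PjiAux.tcl_mono PjiAux.tint_subset h1)
    · intro x hx hxlt
      by_cases hc : tint e x ⊆ pminus e a b U
      · have hx2 : x = tcl (tint e x) := hx.2
        rw [hx2]
        exact PjiAux.tcl_mono
          (PjiAux.open_subset_tint PjiAux.tint_subset_left (PjiAux.trans_diff_tint he x) hc)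
      · rw [Set.not_subset] at hc
        obtain ⟨z, hz1, hz2⟩ := hc
        obtain ⟨c, d⟩ := z
        have hcdp : (c, d) ∈ pji e a b U := hxlt.subset (PjiAux.tint_subset hz1)
        have hdis : (a ≠ b ∧ eqv e c a ∧ eqv e d b) ∨ (a = b ∧ (c, d) = (a, a)) := by
          by_contra h
          exact hz2 ⟨hcdp, h⟩
        have hpx : pji e a b U ⊆ x := by
          rcases hdis with ⟨hab, hca, hdb⟩ | ⟨hab, hcd'⟩
          · exact PjiAux.claimA he hF hab hx hxlt.subset hz1 hca.1 hdb.2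
          · subst hab
            rw [hcd'] at hz1
            exact PjiAux.claimA' he hF hx hxlt.subset hz1
        exact (hxlt.not_subset hpx).elim
end

section
/- Let e be a transitive relation on a finite set E. The following are equivalent: (i) the lattice Reg(e) is semidistributive; (ii) the lattice Reg(e) is pseudocomplemented; (iii) every connected component of the preorder ⊴ (i.e., every equivalence class of the least equivalence relation on E containing e) either is a set on which ⊴ is antisymmetric, or is a two-element set {a,b} with a ≠ b, (a,b) ∈ e, and (b,a) ∈ e. -/
/-- The join in `Reg(e)`. -/
def regJoin {E : Type*} (x y : Set (E × E)) : Set (E × E) := tcl (x ∪ y)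

/-- The meet in `Reg(e)`. -/
def regMeet {E : Type*} (e x y : Set (E × E)) : Set (E × E) := tcl (tint e (x ∩ y))

namespace RegWork

variable {E : Type*}

lemma mem_tcl {a : Set (E × E)} {p q : E} :
    (p, q) ∈ tcl a ↔ Relation.TransGen (fun u v => (u, v) ∈ a) p q := Iff.rfl

lemma subset_tcl (a : Set (E × E)) : a ⊆ tcl a := by
  rintro ⟨p, q⟩ h; exact Relation.TransGen.single h

lemma tcl_mono {a b : Set (E × E)} (h : a ⊆ b) : tcl a ⊆ tcl b := by
  rintro ⟨p, q⟩ hp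
  exact Relation.TransGen.mono (fun u v huv => h huv) _ _ hp

lemma transRel_tcl (a : Set (E × E)) : TransRel (tcl a) := by
  intro x y z hxy hyz; exact Relation.TransGen.trans hxy hyz

lemma tcl_subset_of_transRel {a b : Set (E × E)} (hb : TransRel b) (h : a ⊆ b) :
    tcl a ⊆ b := by
  rintro ⟨p, q⟩ hp
  have hp' : Relation.TransGen (fun u v => (u, v) ∈ a) p q := hp
  clear hp
  induction hp' with
  | single h' => exact h h'
  | tail _ h' ih => exact hb _ _ _ ih (h h')

lemma tcl_eq_self {a : Set (E × E)} (ha : TransRel a) : tcl a = a :=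
  le_antisymm (tcl_subset_of_transRel ha (le_refl a)) (subset_tcl a)

lemma tcl_idem (a : Set (E × E)) : tcl (tcl a) = tcl a :=
  tcl_eq_self (transRel_tcl a)

lemma transRel_empty : TransRel (∅ : Set (E × E)) := by
  intro x y z h; exact absurd h (Set.notMem_empty _)

@[simp] lemma tcl_empty : tcl (∅ : Set (E × E)) = ∅ :=
  le_antisymm (tcl_subset_of_transRel transRel_empty (le_refl _)) (Set.empty_subset _)

lemma tcl_subset_e {e a : Set (E × E)} (he : TransRel e) (h : a ⊆ e) : tcl a ⊆ e :=
  tcl_subset_of_transRel he h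

lemma tint_subset (e a : Set (E × E)) : tint e a ⊆ e ∩ a := by
  rintro ⟨p, q⟩ ⟨hpe, hnp⟩
  refine ⟨hpe, ?_⟩
  by_contra hpa
  exact hnp (subset_tcl _ ⟨hpe, hpa⟩)

lemma tint_subset_left (e a : Set (E × E)) : tint e a ⊆ e := fun _ hp => hp.1

lemma tint_mono {e a b : Set (E × E)} (h : a ⊆ b) : tint e a ⊆ tint e b := by
  rintro p ⟨hpe, hnp⟩
  exact ⟨hpe, fun hc => hnp (tcl_mono (Set.diff_subset_diff_right h) hc)⟩

lemma regMeet_mono_right {e x y z : Set (E × E)} (h : y ⊆ z) :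
    regMeet e x y ⊆ regMeet e x z :=
  tcl_mono (tint_mono (Set.inter_subset_inter_right _ h))

lemma tint_split {e s : Set (E × E)} {a b c : E}
    (hac : (a, c) ∈ tint e s) (hab : (a, b) ∈ e) (hbc : (b, c) ∈ e) :
    (a, b) ∈ tint e s ∨ (b, c) ∈ tint e s := by
  by_contra h
  push_neg at h
  have h1 : (a, b) ∈ tcl (e \ s) := by
    by_contra h'; exact h.1 ⟨hab, h'⟩
  have h2 : (b, c) ∈ tcl (e \ s) := by
    by_contra h'; exact h.2 ⟨hbc, h'⟩
  exact hac.2 (Relation.TransGen.trans h1 h2)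

lemma transGen_mem_e {e r : Set (E × E)} (he : TransRel e) (hr : r ⊆ e) {a b : E}
    (h : Relation.TransGen (fun u v => (u, v) ∈ r) a b) : (a, b) ∈ e :=
  tcl_subset_e he hr (show ((a, b) : E × E) ∈ tcl r from h)

lemma not_mem_tint {e s : Set (E × E)} {p : E × E} (hpe : p ∈ e) (h : p ∉ tint e s) :
    p ∈ tcl (e \ s) := by
  by_contra h'; exact h ⟨hpe, h'⟩

lemma compl_tint_subset (e a : Set (E × E)) : e \ tcl (tint e a) ⊆ tcl (e \ a) := by
  rintro q ⟨hqe, hq⟩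
  have : q ∉ tint e a := fun h => hq (subset_tcl _ h)
  exact not_mem_tint hqe this

lemma regClosed_tcl_tint (e : Set (E × E)) (he : TransRel e) (a : Set (E × E)) :
    RegClosed e (tcl (tint e a)) := by
  constructor
  · exact tcl_subset_e he (tint_subset_left e a)
  · apply le_antisymm
    · apply tcl_mono
      intro p hp
      refine ⟨hp.1, fun hc => hp.2 ?_⟩
      have := tcl_mono (compl_tint_subset e a) hc
      rwa [tcl_idem] at this
    · apply tcl_subset_of_transRel (transRel_tcl _)
      intro p hp
      exact (tint_subset e _ hp).2

lemma regClosed_empty (e : Set (E × E)) (he : TransRel e) :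
    RegClosed e (∅ : Set (E × E)) := by
  refine ⟨Set.empty_subset e, ?_⟩
  have : tint e (∅ : Set (E × E)) = ∅ :=
    Set.eq_empty_of_subset_empty (fun p hp => (tint_subset e _ hp).2)
  rw [this, tcl_empty]

lemma regMeet_regClosed (e : Set (E × E)) (he : TransRel e) (x y : Set (E × E)) :
    RegClosed e (regMeet e x y) := regClosed_tcl_tint e he _

lemma regClosed_closed {e x : Set (E × E)} (hx : RegClosed e x) : TransRel x := by
  rw [hx.2]; exact transRel_tcl _

lemma tcl_union_right_tcl (a b : Set (E × E)) : tcl (a ∪ tcl b) = tcl (a ∪ b) := by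
  apply le_antisymm
  · apply tcl_subset_of_transRel (transRel_tcl _)
    rintro p (hp | hp)
    · exact subset_tcl _ (Or.inl hp)
    · exact tcl_mono Set.subset_union_right hp
  · exact tcl_mono (Set.union_subset_union_right _ (subset_tcl b))

lemma regJoin_regClosed {e : Set (E × E)} (he : TransRel e) {x y : Set (E × E)}
    (hx : RegClosed e x) (hy : RegClosed e y) : RegClosed e (regJoin x y) := by
  constructor
  · exact tcl_subset_e he (Set.union_subset hx.1 hy.1)
  · apply le_antisymm
    · apply tcl_subset_of_transRel (transRel_tcl _)
      have key : ∀ w : Set (E × E), RegClosed e w → w ⊆ x ∪ y →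
          w ⊆ tcl (tint e (tcl (x ∪ y))) := by
        intro w hw hwsub
        conv_lhs => rw [hw.2]
        apply tcl_mono
        intro p hp
        refine ⟨hp.1, fun hc => hp.2 ?_⟩
        refine tcl_mono (Set.diff_subset_diff_right ?_) hc
        exact le_trans hwsub (subset_tcl _)
      rintro p (hp | hp)
      · exact key x hx Set.subset_union_left hp
      · exact key y hy Set.subset_union_right hp
    · apply tcl_subset_of_transRel (transRel_tcl _)
      intro p hp
      exact (tint_subset e _ hp).2

lemma regMeet_subset_left {e x y : Set (E × E)} (hx : RegClosed e x) :
    regMeet e x y ⊆ x :=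
  tcl_subset_of_transRel (regClosed_closed hx) (fun p hp => ((tint_subset e _ hp).2).1)

lemma regMeet_subset_right {e x y : Set (E × E)} (hy : RegClosed e y) :
    regMeet e x y ⊆ y :=
  tcl_subset_of_transRel (regClosed_closed hy) (fun p hp => ((tint_subset e _ hp).2).2)

lemma subset_regJoin_left (x y : Set (E × E)) : x ⊆ regJoin x y :=
  le_trans Set.subset_union_left (subset_tcl _)

lemma subset_regJoin_right (x y : Set (E × E)) : y ⊆ regJoin x y :=
  le_trans Set.subset_union_right (subset_tcl _)

lemma regJoin_subset {e x y z : Set (E × E)} (hz : TransRel z) (hx : x ⊆ z) (hy : y ⊆ z) :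
    regJoin x y ⊆ z :=
  tcl_subset_of_transRel hz (Set.union_subset hx hy)

lemma regMeet_comm (e x y : Set (E × E)) : regMeet e x y = regMeet e y x := by
  unfold regMeet; rw [Set.inter_comm]

lemma regMeet_empty_iff {e x y : Set (E × E)} :
    regMeet e x y = ∅ ↔ tint e (x ∩ y) = ∅ := by
  constructor
  · intro h
    apply Set.eq_empty_of_subset_empty
    rw [← h]; exact subset_tcl _
  · intro h; rw [regMeet, h, tcl_empty]

lemma subset_regMeet {e x y w : Set (E × E)} (hw : RegClosed e w)
    (hx : w ⊆ x) (hy : w ⊆ y) : w ⊆ regMeet e x y := by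
  conv_lhs => rw [hw.2]
  exact tcl_mono (tint_mono (Set.subset_inter hx hy))



/-! ### Orthocomplement -/

def orth (e a : Set (E × E)) : Set (E × E) := tcl (e \ a)

variable {e : Set (E × E)}

lemma tint_compl_of_closed (he : TransRel e) {a : Set (E × E)} (hae : a ⊆ e)
    (ha : TransRel a) : tint e (e \ a) = e \ a := by
  unfold tint
  have h1 : e \ (e \ a) = a := by
    ext p; constructor
    · rintro ⟨hpe, hp⟩
      by_contra h; exact hp ⟨hpe, h⟩
    · intro hp; exact ⟨hae hp, fun h => h.2 hp⟩
  rw [h1, tcl_eq_self ha]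

lemma orth_regClosed (he : TransRel e) {a : Set (E × E)} (hae : a ⊆ e)
    (ha : TransRel a) : RegClosed e (orth e a) := by
  have : orth e a = tcl (tint e (e \ a)) := by
    rw [tint_compl_of_closed he hae ha]; rfl
  rw [this]
  exact regClosed_tcl_tint e he _

lemma orth_orth (he : TransRel e) {a : Set (E × E)} (ha : RegClosed e a) :
    orth e (orth e a) = a := by
  show tcl (e \ tcl (e \ a)) = a
  rw [show e \ tcl (e \ a) = tint e a from rfl]
  exact ha.2.symm

lemma tcl_union_tint_eq (he : TransRel e) {x z : Set (E × E)}
    (hx : RegClosed e x) (hz : RegClosed e z) :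
    tcl (tint e x ∪ tint e z) = tcl (x ∪ z) := by
  apply le_antisymm
  · exact tcl_mono (Set.union_subset_union (fun p hp => (tint_subset e x hp).2)
      (fun p hp => (tint_subset e z hp).2))
  · apply tcl_subset_of_transRel (transRel_tcl _)
    rintro p (hp | hp)
    · rw [hx.2] at hp
      exact tcl_mono Set.subset_union_left hp
    · rw [hz.2] at hp
      exact tcl_mono Set.subset_union_right hp

lemma orth_regJoin (he : TransRel e) {x z : Set (E × E)}
    (hx : RegClosed e x) (hz : RegClosed e z) :
    orth e (regJoin x z) = regMeet e (orth e x) (orth e z) := by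
  show tcl (e \ tcl (x ∪ z)) = tcl (tint e (tcl (e \ x) ∩ tcl (e \ z)))
  have h1 : e \ (tcl (e \ x) ∩ tcl (e \ z)) = tint e x ∪ tint e z := by
    rw [Set.diff_inter]; rfl
  unfold tint
  rw [h1]
  rw [show (tint e x ∪ tint e z : Set (E × E)) = tint e x ∪ tint e z from rfl]
  rw [tcl_union_tint_eq he hx hz]

lemma orth_regMeet (he : TransRel e) {a b : Set (E × E)}
    (ha : RegClosed e a) (hb : RegClosed e b) :
    orth e (regMeet e a b) = regJoin (orth e a) (orth e b) := by
  show tcl (e \ tcl (tint e (a ∩ b))) = tcl (tcl (e \ a) ∪ tcl (e \ b))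
  have h2 : tcl (tcl (e \ a) ∪ tcl (e \ b)) = tcl ((e \ a) ∪ (e \ b)) := by
    rw [tcl_union_right_tcl]
    rw [Set.union_comm (tcl (e \ a)), tcl_union_right_tcl, Set.union_comm]
  rw [h2, ← Set.diff_inter]
  apply le_antisymm
  · have := tcl_mono (compl_tint_subset e (a ∩ b))
    rw [tcl_idem] at this
    exact this
  · apply tcl_mono
    intro p hp
    refine ⟨hp.1, fun hc => ?_⟩
    have hsub : tcl (tint e (a ∩ b)) ⊆ a ∩ b := by
      intro q hq
      constructor
      · exact tcl_subset_of_transRel (regClosed_closed ha)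
          (fun r hr => ((tint_subset e _ hr).2).1) hq
      · exact tcl_subset_of_transRel (regClosed_closed hb)
          (fun r hr => ((tint_subset e _ hr).2).2) hq
    exact hp.2 (hsub hc)

/-- Join-semidistributivity instance from meet-semidistributivity (via orthocomplement). -/
lemma sdjoin_of_sdmeet (he : TransRel e)
    (hSD : ∀ x y z : Set (E × E), RegClosed e x → RegClosed e y → RegClosed e z →
      regMeet e x z = regMeet e y z → regMeet e x z = regMeet e (regJoin x y) z)
    {x y z : Set (E × E)} (hx : RegClosed e x) (hy : RegClosed e y) (hz : RegClosed e z)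
    (h : regJoin x z = regJoin y z) :
    regJoin x z = regJoin (regMeet e x y) z := by
  have hpx := orth_regClosed he hx.1 (regClosed_closed hx)
  have hpy := orth_regClosed he hy.1 (regClosed_closed hy)
  have hpz := orth_regClosed he hz.1 (regClosed_closed hz)
  have h1 : regMeet e (orth e x) (orth e z) = regMeet e (orth e y) (orth e z) := by
    rw [← orth_regJoin he hx hz, ← orth_regJoin he hy hz, h]
  have h2 := hSD _ _ _ hpx hpy hpz h1
  have h3 := congrArg (orth e) h2
  have hJ : RegClosed e (regJoin (orth e x) (orth e y)) := regJoin_regClosed he hpx hpy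
  rw [orth_regMeet he hpx hpz, orth_regMeet he hJ hpz,
    orth_orth he hx, orth_orth he hz, orth_regJoin he hpx hpy,
    orth_orth he hx, orth_orth he hy] at h3
  exact h3


/-! ### Condition C and its consequences -/

/-- Condition (iii) of the theorem. -/
def CondC (e : Set (E × E)) : Prop :=
  ∀ c : E,
    (∀ u v : E, Relation.EqvGen (fun s t => (s, t) ∈ e) c u →
      Relation.EqvGen (fun s t => (s, t) ∈ e) c v →
      (u, v) ∈ e → (v, u) ∈ e → u = v) ∨
    (∃ a b : E, a ≠ b ∧ {x | Relation.EqvGen (fun s t => (s, t) ∈ e) c x} = {a, b} ∧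
      (a, b) ∈ e ∧ (b, a) ∈ e)

/-- Isolation property of cyclic pairs. -/
def IsoProp (e : Set (E × E)) : Prop :=
  ∀ p q : E, p ≠ q → (p, q) ∈ e → (q, p) ∈ e →
    ∀ z, ((p, z) ∈ e → z = p ∨ z = q) ∧ ((z, p) ∈ e → z = p ∨ z = q)

lemma condC_isoProp {e : Set (E × E)} (hC : CondC e) : IsoProp e := by
  intro p q hpq hpqe hqpe z
  rcases hC p with h | ⟨a, b, hab, hset, _hab2⟩
  · exact absurd (h p q (Relation.EqvGen.refl p) (Relation.EqvGen.rel _ _ hpqe) hpqe hqpe) hpq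
  · have hp : p ∈ ({a, b} : Set E) := by rw [← hset]; exact Relation.EqvGen.refl p
    have hq : q ∈ ({a, b} : Set E) := by rw [← hset]; exact Relation.EqvGen.rel _ _ hpqe
    have key : ∀ w, w ∈ ({a, b} : Set E) → w = p ∨ w = q := by
      intro w hw
      rcases hp with hp | hp <;> rcases hq with hq | hq <;>
        rcases hw with hw | hw <;> simp_all <;> tauto
    constructor
    · intro hz
      have : z ∈ ({a, b} : Set E) := by
        rw [← hset]; exact Relation.EqvGen.rel _ _ hz
      exact key z this
    · intro hz
      have : z ∈ ({a, b} : Set E) := by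
        rw [← hset]
        exact Relation.EqvGen.symm _ _ (Relation.EqvGen.rel _ _ hz)
      exact key z this

lemma rle_trans (he : TransRel e) {a b c : E} (h1 : rle e a b) (h2 : rle e b c) : rle e a c := by
  rcases h1 with h1 | rfl
  · rcases h2 with h2 | rfl
    · exact Or.inl (he _ _ _ h1 h2)
    · exact Or.inl h1
  · exact h2

lemma rle_refl (a : E) : rle e a a := Or.inr rfl

/-- Walks from `u` inside an isolated cyclic pair `{u,v}` stay in the pair,
and record the needed edges. -/
lemma cyc_walk {r : Set (E × E)} (hr : r ⊆ e) {u v : E} (hne : u ≠ v)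
    (huv : (u, v) ∈ e) (hvu : (v, u) ∈ e) (hIso : IsoProp e) :
    ∀ t, Relation.TransGen (fun s t => (s, t) ∈ r) u t →
      (t = u ∨ t = v) ∧ (t = v → (u, v) ∈ r) ∧
      (t = u → ((u, u) ∈ r ∨ ((u, v) ∈ r ∧ (v, u) ∈ r))) := by
  have hKu := fun z => (hIso u v hne huv hvu z).1
  have hKv := fun z => (hIso v u hne.symm hvu huv z).1
  intro t ht
  induction ht with
  | single h =>
    have h' := hr h
    refine ⟨hKu _ h', fun htv => by rwa [htv] at h, fun htu => Or.inl (by rwa [htu] at h)⟩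
  | tail hs hst ih =>
    rename_i s t'
    have hse := hr hst
    have hs_mem := ih.1
    have ht'_mem : t' = u ∨ t' = v := by
      rcases hs_mem with rfl | rfl
      · exact hKu _ hse
      · rcases hKv _ hse with h | h
        · exact Or.inr h
        · exact Or.inl h
    refine ⟨ht'_mem, ?_, ?_⟩
    · rintro rfl
      rcases hs_mem with rfl | rfl
      · exact hst
      · exact ih.2.1 rfl
    · rintro rfl
      rcases hs_mem with rfl | rfl
      · exact Or.inl hst
      · exact Or.inr ⟨ih.2.1 rfl, hst⟩

/-- Walks from a loop-element with no cyclic partner. -/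
lemma loop_walk (he : TransRel e) {r : Set (E × E)} (hr : r ⊆ e) {u : E}
    (hnp : ∀ z, (u, z) ∈ e → (z, u) ∈ e → z = u) :
    ∀ t, Relation.TransGen (fun s t => (s, t) ∈ r) u t →
      (t, u) ∈ e → t = u ∧ (u, u) ∈ r := by
  intro t ht
  induction ht with
  | single h =>
    rename_i t'
    intro htu
    have h' := hr h
    have heq : t' = u := hnp _ h' htu
    subst heq
    exact ⟨rfl, h⟩
  | tail hs hst ih =>
    rename_i s t'
    intro ht'u
    have hse := hr hst
    have hsu : (s, u) ∈ e := he _ _ _ hse ht'u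
    obtain ⟨hseq, huu⟩ := ih hsu
    exact ⟨hnp _ (hseq ▸ hse) ht'u, huu⟩

/-- The prime-edge extraction lemma: an interior edge decomposed along a path
contains an interior edge on the path. -/
lemma prime_edge (he : TransRel e) {r S : Set (E × E)} (hr : r ⊆ e) (hIso : IsoProp e) {a : E} :
    ∀ b, Relation.TransGen (fun s t => (s, t) ∈ r) a b →
      (a, b) ∈ tint e S → (b, a) ∉ e →
      (a, b) ∈ r ∨ ∃ c d : E, (c, d) ∈ tint e S ∧ (c, d) ≠ (a, b) ∧
        rle e a c ∧ rle e d b := by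
  intro b hb
  induction hb with
  | single h => intro _ _; exact Or.inl h
  | tail hs hst ih =>
    rename_i s t
    intro ho hta
    by_cases hsa : s = a
    · subst hsa; exact Or.inl hst
    have has_e : (a, s) ∈ e := transGen_mem_e he hr hs
    have hst_e : (s, t) ∈ e := hr hst
    have hat_e : (a, t) ∈ e := ho.1
    rcases tint_split ho has_e hst_e with hsp | hsp
    · -- (a,s) ∈ tint e S : use IH
      have hsa_ne : (s, a) ∉ e := by
        intro hsae
        have hcyc := hIso a s (fun h => hsa h.symm) has_e hsae
        rcases (hcyc t).1 hat_e with rfl | rfl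
        · exact hta (he _ _ _ has_e hsae)
        · exact hta hsae
      rcases ih hsp hsa_ne with hr1 | ⟨c, d, hcd, hne, hac, hds⟩
      · by_cases hst' : s = t
        · subst hst'; exact Or.inl hr1
        · exact Or.inr ⟨a, s, hsp, by simp [hst'], rle_refl a, Or.inl hst_e⟩
      · refine Or.inr ⟨c, d, hcd, ?_, hac, rle_trans he hds (Or.inl hst_e)⟩
        intro hceq
        have hd : d = t := congrArg Prod.snd hceq
        by_cases hst' : s = t
        · exact hne (by rw [hst']; exact hceq)
        · have hds' : rle e t s := hd ▸ hds
          rcases hds' with hts | hts_eq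
          · have hcyc := hIso t s (fun h => hst' h.symm) hts hst_e
            rcases (hcyc a).2 hat_e with h | h
            · exact hta (by rw [h]; exact he _ _ _ hts hst_e)
            · exact hsa h.symm
          · exact hst' hts_eq.symm
    · -- (s,t) ∈ tint e S
      exact Or.inr ⟨s, t, hsp, by simp [hsa], Or.inl has_e, rle_refl t⟩

/-- The interval measure. -/
noncomputable def mu (e : Set (E × E)) (p : E × E) : ℕ := (cce e p.1 p.2).ncard

lemma cce_subset (he : TransRel e) {a b c d : E} (hac : rle e a c) (hdb : rle e d b) :
    cce e c d ⊆ cce e a b := by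
  intro t ⟨h1, h2⟩
  exact ⟨rle_trans he hac h1, rle_trans he h2 hdb⟩

lemma mu_strict [Finite E] (he : TransRel e) (hIso : IsoProp e) {a b c d : E}
    (hab : (a, b) ∈ e) (hba : (b, a) ∉ e)
    (hac : rle e a c) (hdb : rle e d b) (hne : (c, d) ≠ (a, b)) :
    mu e (c, d) < mu e (a, b) := by
  have hab_ne : a ≠ b := by rintro rfl; exact hba hab
  have hsub := cce_subset he hac hdb (a := a) (b := b)
  have hproper : ∃ t, t ∈ cce e a b ∧ t ∉ cce e c d := by
    by_cases hca : c = a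
    · have hd : d ≠ b := by
        intro h; exact hne (by rw [hca, h])
      refine ⟨b, ⟨Or.inl hab, rle_refl b⟩, ?_⟩
      rintro ⟨hcb, hbd⟩
      -- hcb : rle a b (fine), hbd : rle b d
      rcases hbd with hbd | rfl
      · rcases hdb with hdbe | rfl
        · have hcyc := hIso b d (Ne.symm hd) hbd hdbe
          rcases (hcyc a).2 hab with h | h
          · exact hba (by rw [h]; exact h ▸ hab)
          · exact hba (by rw [h]; exact hbd)
        · exact hd rfl
      · exact hd rfl
    · refine ⟨a, ⟨rle_refl a, Or.inl hab⟩, ?_⟩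
      rintro ⟨hca', _⟩
      rcases hca' with hcae | rfl
      · rcases hac with hace | rfl
        · have hcyc := hIso a c (fun h => hca h.symm) hace hcae
          rcases (hcyc b).1 hab with h | h
          · exact hba (by rw [h]; exact h ▸ hab)
          · exact hba (by rw [h]; exact hcae)
        · exact hca rfl
      · exact hca rfl
  obtain ⟨t, ht1, ht2⟩ := hproper
  apply Set.ncard_lt_ncard
  · exact ⟨hsub, fun h => ht2 (h ht1)⟩
  · exact Set.toFinite _


/-! ### Key meet lemmas for the positive direction -/

lemma pc_cyc_aux (he : TransRel e) (hIso : IsoProp e) {x w : Set (E × E)}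
    (hw : w ⊆ e) (hxw : regMeet e x w = ∅) {p q : E} (hne : p ≠ q)
    (hpq : (p, q) ∈ e) (hqp : (q, p) ∈ e) (hmem : (p, q) ∈ x ∩ w) : False := by
  have htint : (p, q) ∈ tint e (x ∩ w) := by
    refine ⟨hpq, fun hcl => ?_⟩
    have := (cyc_walk (hr := Set.diff_subset) hne hpq hqp hIso q hcl).2.1 rfl
    exact this.2 hmem
  have : (p, q) ∈ regMeet e x w := subset_tcl _ htint
  rw [hxw] at this
  exact this

lemma pc_loop_aux (he : TransRel e) {x w : Set (E × E)}
    (hw : w ⊆ e) (hxw : regMeet e x w = ∅) {p : E}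
    (hnp : ∀ d, (p, d) ∈ e → (d, p) ∈ e → d = p)
    (hpp : (p, p) ∈ e) (hmem : (p, p) ∈ x ∩ w) : False := by
  have htint : (p, p) ∈ tint e (x ∩ w) := by
    refine ⟨hpp, fun hcl => ?_⟩
    have := (loop_walk he (hr := Set.diff_subset) hnp p hcl hpp).2
    exact this.2 hmem
  have : (p, p) ∈ regMeet e x w := subset_tcl _ htint
  rw [hxw] at this
  exact this

lemma pc_acyc_aux [Finite E] (he : TransRel e) (hIso : IsoProp e) {x w S : Set (E × E)}
    (hw : w ⊆ e) (hxw : regMeet e x w = ∅) {a b : E}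
    (hG : (a, b) ∈ tint e S) (hba : (b, a) ∉ e) (hmem : (a, b) ∈ x ∩ w)
    (IH : ∀ c d : E, (c, d) ∈ tint e S → mu e (c, d) < mu e (a, b) → False) : False := by
  have hab_e : (a, b) ∈ e := hG.1
  have hcl : (a, b) ∈ tcl (e \ (x ∩ w)) := by
    apply not_mem_tint hab_e
    intro htint
    have : (a, b) ∈ regMeet e x w := subset_tcl _ htint
    rw [hxw] at this; exact this
  rcases prime_edge he (Set.diff_subset) hIso b hcl hG hba with h | ⟨c, d, hcd, hne, hac, hdb⟩
  · exact h.2 hmem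
  · exact IH c d hcd (mu_strict he hIso hab_e hba hac hdb hne)

/-- An edge of `x ∩ tcl (y ∪ z)` that is part of a cyclic pair or a loop leads to a
contradiction when `x ∧ y = x ∧ z = 0`. -/
lemma pc_mem_aux (he : TransRel e) (hIso : IsoProp e) {x y z : Set (E × E)}
    (hy : y ⊆ e) (hz : z ⊆ e)
    (hxy : regMeet e x y = ∅) (hxz : regMeet e x z = ∅) {p q : E}
    (hpq : (p, q) ∈ e) (hqp : (q, p) ∈ e)
    (hG : (p, q) ∈ tint e (x ∩ tcl (y ∪ z))) : False := by
  have hyz : y ∪ z ⊆ e := Set.union_subset hy hz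
  have hmem : (p, q) ∈ x ∩ tcl (y ∪ z) := (tint_subset e _ hG).2
  -- treatment of a cyclic (non-loop) edge in x ∩ tcl (y ∪ z):
  have cycCase : ∀ p' q' : E, p' ≠ q' → (p', q') ∈ e → (q', p') ∈ e →
      (p', q') ∈ x ∩ tcl (y ∪ z) → False := by
    intro p' q' hne hpq' hqp' hmem'
    have := (cyc_walk (hr := hyz) hne hpq' hqp' hIso q' hmem'.2).2.1 rfl
    rcases this with h | h
    · exact pc_cyc_aux he hIso hy hxy hne hpq' hqp' ⟨hmem'.1, h⟩
    · exact pc_cyc_aux he hIso hz hxz hne hpq' hqp' ⟨hmem'.1, h⟩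
  by_cases hne : p = q
  · subst hne
    by_cases hpart : ∃ d, d ≠ p ∧ (p, d) ∈ e ∧ (d, p) ∈ e
    · obtain ⟨d, hdne, hpd, hdp⟩ := hpart
      have hsplit : (p, d) ∈ x ∩ tcl (y ∪ z) ∨ (d, p) ∈ x ∩ tcl (y ∪ z) := by
        by_contra hcon
        push_neg at hcon
        refine hG.2 (Relation.TransGen.trans
          (Relation.TransGen.single (b := d) ⟨hpd, hcon.1⟩)
          (Relation.TransGen.single ⟨hdp, hcon.2⟩))
      rcases hsplit with h | h
      · exact cycCase p d (fun hh => hdne hh.symm) hpd hdp h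
      · exact cycCase d p hdne hdp hpd h
    · push_neg at hpart
      have hnp : ∀ d, (p, d) ∈ e → (d, p) ∈ e → d = p := by
        intro d h1 h2
        by_contra hc
        exact hpart d hc h1 h2
      have := loop_walk he (hr := hyz) hnp p hmem.2 hpq
      rcases this.2 with h | h
      · exact pc_loop_aux he hy hxy hnp hpq ⟨hmem.1, h⟩
      · exact pc_loop_aux he hz hxz hnp hpq ⟨hmem.1, h⟩
  · exact cycCase p q hne hpq hqp hmem


lemma pc_key [Finite E] (he : TransRel e) (hC : CondC e) {x y z : Set (E × E)}
    (hy : y ⊆ e) (hz : z ⊆ e)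
    (hxy : regMeet e x y = ∅) (hxz : regMeet e x z = ∅) :
    regMeet e x (regJoin y z) = ∅ := by
  have hIso := condC_isoProp hC
  rw [regMeet_empty_iff]
  have main : ∀ n : ℕ, ∀ a b : E, (a, b) ∈ tint e (x ∩ tcl (y ∪ z)) →
      mu e (a, b) ≤ n → False := by
    intro n
    induction n using Nat.strong_induction_on with
    | _ n IHn =>
      intro a b hG hmu
      have hab_e : (a, b) ∈ e := hG.1
      have hmem := (tint_subset e _ hG).2
      by_cases hba : (b, a) ∈ e
      · exact pc_mem_aux he hIso hy hz hxy hxz hab_e hba hG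
      · have IH : ∀ c d : E, (c, d) ∈ tint e (x ∩ tcl (y ∪ z)) →
            mu e (c, d) < mu e (a, b) → False := by
          intro c d hcd hlt
          exact IHn (mu e (c, d)) (lt_of_lt_of_le hlt hmu) c d hcd le_rfl
        rcases prime_edge he (Set.union_subset hy hz) hIso b hmem.2 hG hba with
          h | ⟨c, d, hcd, hne, hac, hdb⟩
        · rcases h with h | h
          · exact pc_acyc_aux he hIso hy hxy hG hba ⟨hmem.1, h⟩ IH
          · exact pc_acyc_aux he hIso hz hxz hG hba ⟨hmem.1, h⟩ IH
        · exact IH c d hcd (mu_strict he hIso hab_e hba hac hdb hne)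
  apply Set.eq_empty_iff_forall_notMem.mpr
  rintro ⟨a, b⟩ hp
  exact main (mu e (a, b)) a b hp le_rfl

lemma regMeet_empty_right (e x : Set (E × E)) : regMeet e x ∅ = ∅ := by
  rw [regMeet_empty_iff]
  apply Set.eq_empty_of_subset_empty
  intro p hp
  exact ((tint_subset e _ hp).2).2

/-- Positive direction: pseudocomplementedness. -/
lemma pos_pc [Finite E] (he : TransRel e) (hC : CondC e) :
    ∀ x : Set (E × E), RegClosed e x →
      ∃ y, RegClosed e y ∧ regMeet e x y = ∅ ∧
        ∀ z, RegClosed e z → regMeet e x z = ∅ → z ⊆ y := by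
  intro x hx
  classical
  set D : Set (Set (E × E)) := {w | RegClosed e w ∧ regMeet e x w = ∅} with hD
  have hfin : D.Finite := Set.toFinite D
  have key : ∀ F : Finset (Set (E × E)), (↑F : Set (Set (E × E))) ⊆ D →
      RegClosed e (tcl (⋃₀ (↑F : Set (Set (E × E))))) ∧
        regMeet e x (tcl (⋃₀ (↑F : Set (Set (E × E))))) = ∅ := by
    intro F
    induction F using Finset.induction_on with
    | empty =>
      intro _
      rw [Finset.coe_empty, Set.sUnion_empty, tcl_empty]
      exact ⟨regClosed_empty e he, regMeet_empty_right e x⟩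
    | @insert a F ha IH =>
      intro hsub
      rw [Finset.coe_insert] at hsub ⊢
      have haD : a ∈ D := hsub (Set.mem_insert _ _)
      have hFD : (↑F : Set (Set (E × E))) ⊆ D := fun w hw => hsub (Set.mem_insert_of_mem _ hw)
      obtain ⟨hreg, hmeet⟩ := IH hFD
      have heq : tcl (⋃₀ insert a (↑F : Set (Set (E × E)))) =
          regJoin a (tcl (⋃₀ (↑F : Set (Set (E × E))))) := by
        rw [Set.sUnion_insert, regJoin, tcl_union_right_tcl]
      rw [heq]
      refine ⟨regJoin_regClosed he haD.1 hreg, ?_⟩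
      exact pc_key he hC haD.1.1 hreg.1 haD.2 hmeet
  obtain ⟨hreg, hmeet⟩ := key hfin.toFinset (by rw [Set.Finite.coe_toFinset])
  rw [Set.Finite.coe_toFinset] at hreg hmeet
  refine ⟨tcl (⋃₀ D), hreg, hmeet, ?_⟩
  intro z hz hmz
  have : z ∈ D := ⟨hz, hmz⟩
  exact le_trans (Set.subset_sUnion_of_mem this) (subset_tcl _)


/-! ### pji sets and paths -/


lemma mem_pji {a b : E} {U : Set E} {s t : E} :
    (s, t) ∈ pji e a b U ↔
      (s, t) ∈ e ∧ (s = a ∨ (s ∈ cce e a b ∧ s ∉ U)) ∧ (t = b ∨ t ∈ U) := by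
  simp [pji, Set.mem_prod, and_assoc]

lemma pji_rle (he : TransRel e) {a b : E} {U : Set E} (hU : U ⊆ cce e a b)
    {s t : E} (h : (s, t) ∈ pji e a b U) : rle e a s ∧ rle e t b := by
  rw [mem_pji] at h
  constructor
  · rcases h.2.1 with rfl | hs
    · exact rle_refl s
    · exact hs.1.1
  · rcases h.2.2 with rfl | ht
    · exact rle_refl t
    · exact (hU ht).2

lemma pji_clopen (he : TransRel e) {a b : E} {U : Set E} (hab : a ≠ b)
    (hU : U ⊆ cce e a b) (haU : a ∉ U) (hbU : b ∈ U) :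
    TransRel (pji e a b U) ∧ TransRel (e \ pji e a b U) := by
  have hLR : ∀ t : E, (t = b ∨ t ∈ U) → ¬(t = a ∨ (t ∈ cce e a b ∧ t ∉ U)) := by
    rintro t (rfl | ht) (rfl | hs)
    · exact hab rfl
    · exact hs.2 hbU
    · exact haU ht
    · exact hs.2 ht
  constructor
  · intro s t u hst htu
    rw [mem_pji] at hst htu
    exact absurd htu.2.1 (hLR t hst.2.2)
  · intro s m t hsm hmt
    refine ⟨he _ _ _ hsm.1 hmt.1, fun hp => ?_⟩
    rw [mem_pji] at hp
    -- m ∈ interval [a,b]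
    have ham : rle e a m := by
      rcases hp.2.1 with rfl | hs
      · exact Or.inl hsm.1
      · exact rle_trans he hs.1.1 (Or.inl hsm.1)
    have hmb : rle e m b := by
      rcases hp.2.2 with rfl | ht
      · exact Or.inl hmt.1
      · exact rle_trans he (Or.inl hmt.1) (hU ht).2
    by_cases hmU : m ∈ U
    · exact hsm.2 (mem_pji.mpr ⟨hsm.1, hp.2.1, Or.inr hmU⟩)
    · exact hmt.2 (mem_pji.mpr ⟨hmt.1, Or.inr ⟨⟨ham, hmb⟩, hmU⟩, hp.2.2⟩)

/-- interior of a clopen set is itself -/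
lemma tint_eq_self_of_clopen (he : TransRel e) {p : Set (E × E)} (hsub : p ⊆ e)
    (hopen : TransRel (e \ p)) : tint e p = p := by
  unfold tint
  rw [tcl_eq_self hopen]
  ext q; constructor
  · rintro ⟨hqe, hq⟩
    by_contra h; exact hq ⟨hqe, h⟩
  · intro hq; exact ⟨hsub hq, fun h => h.2 hq⟩

lemma pji_regClosed (he : TransRel e) {a b : E} {U : Set E} (hab : a ≠ b)
    (hU : U ⊆ cce e a b) (haU : a ∉ U) (hbU : b ∈ U) :
    RegClosed e (pji e a b U) ∧ tcl (pji e a b U) = pji e a b U := by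
  obtain ⟨h1, h2⟩ := pji_clopen he hab hU haU hbU
  have hsub : pji e a b U ⊆ e := Set.inter_subset_left
  have htcl : tcl (pji e a b U) = pji e a b U := tcl_eq_self h1
  refine ⟨⟨hsub, ?_⟩, htcl⟩
  rw [tint_eq_self_of_clopen he hsub h2, htcl]

/-- The construction ⟨a,b,U⟩ with `U := {t ∈ [a,b] | t ≠ a, (a,t) ∈ o} ∪ {b}`
lands inside the open set `o = tint e S` whenever `(a,b) ∈ o`. -/
lemma pji_subset_int (he : TransRel e) {S : Set (E × E)} {a b : E}
    (hab : (a, b) ∈ tint e S) (hne : a ≠ b) :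
    pji e a b ({t | t ∈ cce e a b ∧ t ≠ a ∧ (a, t) ∈ tint e S} ∪ {b}) ⊆ tint e S := by
  set U := {t | t ∈ cce e a b ∧ t ≠ a ∧ (a, t) ∈ tint e S} ∪ {b} with hUdef
  rintro ⟨s, t⟩ hst
  rw [mem_pji] at hst
  obtain ⟨hste, hsL, htR⟩ := hst
  have hat : (a, t) ∈ tint e S := by
    rcases htR with rfl | ht
    · -- t = b; but we may have s ≠ a; postpone: here establish (a,b) case
      exact hab
    · rcases ht with ⟨_, _, h⟩ | rfl
      · exact h
      · exact hab
  by_cases hsa : s = a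
  · subst hsa; exact hat
  · rcases hsL with rfl | ⟨hsI, hsU⟩
    · exact absurd rfl hsa
    · have has : (a, s) ∈ e := by
        rcases hsI.1 with h | rfl
        · exact h
        · exact absurd rfl hsa
      have hasNot : (a, s) ∉ tint e S := by
        intro h
        exact hsU (Or.inl ⟨hsI, hsa, h⟩)
      rcases tint_split hat has hste with h | h
      · exact absurd h hasNot
      · exact h

/-! Paths as lists -/

def pathP (r : Set (E × E)) : E → List E → E → Prop
  | a, [], b => (a, b) ∈ r
  | a, c :: l, b => (a, c) ∈ r ∧ pathP r c l b

lemma pathP_transGen {r : Set (E × E)} :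
    ∀ (l : List E) (a b : E), pathP r a l b →
      Relation.TransGen (fun u v => (u, v) ∈ r) a b := by
  intro l
  induction l with
  | nil => intro a b h; exact Relation.TransGen.single h
  | cons c l ih =>
    intro a b h
    exact Relation.TransGen.head h.1 (ih c b h.2)

lemma transGen_pathP {r : Set (E × E)} {a b : E}
    (h : Relation.TransGen (fun u v => (u, v) ∈ r) a b) :
    ∃ l, pathP r a l b := by
  have append : ∀ (l : List E) (a s t : E), pathP r a l s → (s, t) ∈ r →
      pathP r a (l ++ [s]) t := by
    intro l
    induction l with
    | nil => intro a s t h1 h2; exact ⟨h1, h2⟩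
    | cons c l ih => intro a s t h1 h2; exact ⟨h1.1, ih c s t h1.2 h2⟩
  induction h with
  | single h => exact ⟨[], h⟩
  | tail hs hst ih =>
    obtain ⟨l, hl⟩ := ih
    exact ⟨l ++ [_], append l _ _ _ hl hst⟩


lemma shorten (he : TransRel e) {x y : Set (E × E)} (hx : TransRel x) (hy : TransRel y)
    (hxe : x ⊆ e) (hye : y ⊆ e) {a b : E} {U : Set E}
    (hq : ∀ c d : E, (c, d) ∈ x ∪ y → c ∉ U → rle e a c → d ∈ U → (c, d) ∈ x ∩ y)
    (hbU : b ∈ U) :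
    ∀ (l : List E) (s : E), s ∉ U → rle e a s → pathP (x ∪ y) s l b →
      l = [] ∨ ∃ l', l'.length < l.length ∧ pathP (x ∪ y) s l' b := by
  intro l
  induction l with
  | nil => intro s _ _ _; exact Or.inl rfl
  | cons c l2 ih =>
    intro s hsU has hpath
    obtain ⟨hstep, hrest⟩ := hpath
    right
    have hstep_e : (s, c) ∈ e := by
      rcases hstep with h | h
      · exact hxe h
      · exact hye h
    by_cases hcU : c ∈ U
    · have hcross : (s, c) ∈ x ∩ y := hq s c hstep hsU has hcU
      cases l2 with
      | nil =>
        rcases hrest with h | h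
        · exact ⟨[], by simp, Or.inl (hx _ _ _ hcross.1 h)⟩
        · exact ⟨[], by simp, Or.inr (hy _ _ _ hcross.2 h)⟩
      | cons c2 l3 =>
        obtain ⟨hstep2, hrest2⟩ := hrest
        rcases hstep2 with h | h
        · exact ⟨c2 :: l3, by simp only [List.length_cons]; omega,
            Or.inl (hx _ _ _ hcross.1 h), hrest2⟩
        · exact ⟨c2 :: l3, by simp only [List.length_cons]; omega,
            Or.inr (hy _ _ _ hcross.2 h), hrest2⟩
    · have hac : rle e a c := rle_trans he has (Or.inl hstep_e)
      rcases ih c hcU hac hrest with heq | ⟨l', hlen, hp'⟩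
      · subst heq
        have hcb := hq c b hrest hcU hac hbU
        rcases hstep with h | h
        · exact ⟨[], by simp, Or.inl (hx _ _ _ h hcb.1)⟩
        · exact ⟨[], by simp, Or.inr (hy _ _ _ h hcb.2)⟩
      · exact ⟨c :: l', by simp only [List.length_cons]; omega, hstep, hp'⟩

lemma no_path (he : TransRel e) {x y : Set (E × E)} (hx : TransRel x) (hy : TransRel y)
    (hxe : x ⊆ e) (hye : y ⊆ e) {a b : E} {U : Set E}
    (hq : ∀ c d : E, (c, d) ∈ x ∪ y → c ∉ U → rle e a c → d ∈ U → (c, d) ∈ x ∩ y)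
    (haU : a ∉ U) (hbU : b ∈ U) (hab_not : (a, b) ∉ x ∪ y) :
    (a, b) ∉ tcl (x ∪ y) := by
  intro hcl
  obtain ⟨l, hl⟩ := transGen_pathP hcl
  have main : ∀ n (l : List E), l.length ≤ n → pathP (x ∪ y) a l b → False := by
    intro n
    induction n using Nat.strong_induction_on with
    | _ n IH =>
      intro l hlen hp
      rcases shorten he hx hy hxe hye hq hbU l a haU (rle_refl a) hp with heq | ⟨l', hl', hp'⟩
      · subst heq; exact hab_not hp
      · exact IH l'.length (lt_of_lt_of_le hl' hlen) l' le_rfl hp'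
  exact main l.length l le_rfl hl

/-- The main positive lemma: meet-semidistributivity under condition C. -/
lemma sdmeet_key [Finite E] (he : TransRel e) (hC : CondC e) {x y z : Set (E × E)}
    (hx : RegClosed e x) (hy : RegClosed e y) (hz : RegClosed e z)
    (hm : regMeet e x z = regMeet e y z) :
    regMeet e x z = regMeet e (regJoin x y) z := by
  have hIso := condC_isoProp hC
  set m := regMeet e x z with hmdef
  set W := tcl (x ∪ y) with hWdef
  have hmx : m ⊆ x := regMeet_subset_left hx
  have hmy : m ⊆ y := by rw [hm]; exact regMeet_subset_left hy
  have hm_closed : TransRel m := transRel_tcl _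
  -- the easy inclusion
  apply le_antisymm
  · exact tcl_mono (tint_mono (Set.inter_subset_inter_left _ (subset_regJoin_left x y)))
  -- the main inclusion
  suffices hGm : tint e (W ∩ z) ⊆ m by
    have h1 : tcl (tint e (W ∩ z)) ⊆ tcl m := tcl_mono hGm
    have h2 : tcl m = m := tcl_idem (tint e (x ∩ z))
    rw [h2] at h1
    exact h1
  -- cyclic edges of W ∩ z are in x∪y, in both meets etc.
  have cycW : ∀ p q : E, p ≠ q → (p, q) ∈ e → (q, p) ∈ e → (p, q) ∈ W ∩ z →
      (p, q) ∈ m ∧ (p, q) ∈ x ∩ z ∧ (p, q) ∈ y ∩ z := by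
    intro p q hne hpq hqp hmem
    have hxy_sub : x ∪ y ⊆ e := Set.union_subset hx.1 hy.1
    have hin_xy : (p, q) ∈ x ∪ y :=
      (cyc_walk (hr := hxy_sub) hne hpq hqp hIso q hmem.1).2.1 rfl
    -- a cyclic edge in w ∩ z gives membership in tint e (w ∩ z)
    have key : ∀ w : Set (E × E), w ⊆ e → (p, q) ∈ w ∩ z → (p, q) ∈ tint e (w ∩ z) := by
      intro w hw hmem'
      refine ⟨hpq, fun hcl => ?_⟩
      exact ((cyc_walk (hr := Set.diff_subset) hne hpq hqp hIso q hcl).2.1 rfl).2 hmem'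
    -- and conversely membership in a meet forces membership in both sets
    have extract : ∀ w : Set (E × E), (p, q) ∈ tcl (tint e (w ∩ z)) → (p, q) ∈ w ∩ z := by
      intro w hmem'
      have h1 : tint e (w ∩ z) ⊆ e := tint_subset_left _ _
      have := (cyc_walk (hr := h1) hne hpq hqp hIso q hmem').2.1 rfl
      exact (tint_subset e _ this).2
    have hpm : (p, q) ∈ m := by
      rcases hin_xy with h | h
      · exact subset_tcl _ (key x hx.1 ⟨h, hmem.2⟩)
      · rw [hm]; exact subset_tcl _ (key y hy.1 ⟨h, hmem.2⟩)
    exact ⟨hpm, extract x hpm, extract y (show (p, q) ∈ regMeet e y z from hm ▸ hpm)⟩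
  -- main strong induction
  have main : ∀ n : ℕ, ∀ a b : E, (a, b) ∈ tint e (W ∩ z) → mu e (a, b) ≤ n →
      (a, b) ∈ m := by
    intro n
    induction n using Nat.strong_induction_on with
    | _ n IHn =>
      intro a b hG hmu
      have hab_e : (a, b) ∈ e := hG.1
      have hmem := (tint_subset e _ hG).2
      have hxy_sub : x ∪ y ⊆ e := Set.union_subset hx.1 hy.1
      by_cases hba : (b, a) ∈ e
      · by_cases hne : a = b
        · -- loop
          subst hne
          by_cases hpart : ∃ d, d ≠ a ∧ (a, d) ∈ e ∧ (d, a) ∈ e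
          · obtain ⟨d, hdne, had, hda⟩ := hpart
            have hsplit : (a, d) ∈ W ∩ z ∨ (d, a) ∈ W ∩ z := by
              by_contra hcon
              push_neg at hcon
              exact hG.2 (Relation.TransGen.trans
                (Relation.TransGen.single (b := d) ⟨had, hcon.1⟩)
                (Relation.TransGen.single ⟨hda, hcon.2⟩))
            have hdne' : a ≠ d := fun h => hdne h.symm
            -- in either case we obtain a cyclic edge in x∩z and y∩z
            have hcycm : ((a, d) ∈ x ∩ z ∧ (a, d) ∈ y ∩ z) ∨
                ((d, a) ∈ x ∩ z ∧ (d, a) ∈ y ∩ z) := by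
              rcases hsplit with h | h
              · exact Or.inl ⟨(cycW a d hdne' had hda h).2.1, (cycW a d hdne' had hda h).2.2⟩
              · exact Or.inr ⟨(cycW d a hdne hda had h).2.1, (cycW d a hdne hda had h).2.2⟩
            -- loop-interior criterion
            have loopInt : ∀ w : Set (E × E), w ⊆ e → (a, a) ∈ w ∩ z →
                ((a, d) ∈ w ∩ z ∨ (d, a) ∈ w ∩ z) → (a, a) ∈ tint e (w ∩ z) := by
              intro w hw hmem' hcycmem
              refine ⟨hab_e, fun hcl => ?_⟩
              have hwalk := cyc_walk (hr := Set.diff_subset) hdne' had hda hIso a hcl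
              rcases hwalk.2.2 rfl with h | ⟨h1, h2⟩
              · exact h.2 hmem'
              · rcases hcycmem with hmemc | hmemc
                · exact h1.2 hmemc
                · exact h2.2 hmemc
            by_cases hax : (a, a) ∈ x
            · have : (a, a) ∈ tint e (x ∩ z) := by
                apply loopInt x hx.1 ⟨hax, hmem.2⟩
                rcases hcycm with h | h
                · exact Or.inl h.1
                · exact Or.inr h.1
              exact subset_tcl _ this
            · by_cases hay : (a, a) ∈ y
              · have : (a, a) ∈ tint e (y ∩ z) := by
                  apply loopInt y hy.1 ⟨hay, hmem.2⟩
                  rcases hcycm with h | h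
                  · exact Or.inl h.2
                  · exact Or.inr h.2
                rw [hm]
                exact subset_tcl _ this
              · -- (a,a) ∉ x ∪ y: the loop in W must decompose through d in x ∪ y
                exfalso
                have hwalk := cyc_walk (hr := hxy_sub) hdne' had hda hIso a hmem.1
                rcases hwalk.2.2 rfl with h | ⟨h1, h2⟩
                · rcases h with h | h
                  · exact hax h
                  · exact hay h
                · -- (a,d) and (d,a) both in x∪y
                  rcases hcycm with ⟨hxad, hyad⟩ | ⟨hxda, hyda⟩
                  · rcases h2 with h | h
                    · exact hax (regClosed_closed hx _ _ _ hxad.1 h)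
                    · exact hay (regClosed_closed hy _ _ _ hyad.1 h)
                  · rcases h1 with h | h
                    · exact hax (regClosed_closed hx _ _ _ h hxda.1)
                    · exact hay (regClosed_closed hy _ _ _ h hyda.1)
          · push_neg at hpart
            have hnp : ∀ d, (a, d) ∈ e → (d, a) ∈ e → d = a := by
              intro d h1 h2
              by_contra hc
              exact hpart d hc h1 h2
            have hin_xy : (a, a) ∈ x ∪ y :=
              (loop_walk he (hr := hxy_sub) hnp a hmem.1 hab_e).2
            have key : ∀ w : Set (E × E), w ⊆ e → (a, a) ∈ w ∩ z →
                (a, a) ∈ tint e (w ∩ z) := by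
              intro w hw hmem'
              refine ⟨hab_e, fun hcl => ?_⟩
              exact (loop_walk he (hr := Set.diff_subset) hnp a hcl hab_e).2.2 hmem'
            rcases hin_xy with h | h
            · exact subset_tcl _ (key x hx.1 ⟨h, hmem.2⟩)
            · rw [hm]; exact subset_tcl _ (key y hy.1 ⟨h, hmem.2⟩)
        · -- genuine cyclic edge
          exact (cycW a b hne hab_e hba hmem).1
      · -- acyclic edge: the pji construction
        have hne : a ≠ b := by rintro rfl; exact hba hab_e
        set U : Set E := {t | t ∈ cce e a b ∧ t ≠ a ∧ (a, t) ∈ tint e (W ∩ z)} ∪ {b}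
          with hUdef
        have hU : U ⊆ cce e a b := by
          rintro t (⟨h, _, _⟩ | rfl)
          · exact h
          · exact ⟨Or.inl hab_e, rle_refl _⟩
        have haU : a ∉ U := by
          rintro (⟨_, h, _⟩ | h)
          · exact h rfl
          · exact hne h
        have hbU : b ∈ U := Or.inr rfl
        set p := pji e a b U with hpdef
        obtain ⟨hpreg, hptcl⟩ := pji_regClosed he hne hU haU hbU
        have hpsub : p ⊆ tint e (W ∩ z) := pji_subset_int he hG hne
        have habp : (a, b) ∈ p := by
          rw [hpdef, mem_pji]
          exact ⟨hab_e, Or.inl rfl, Or.inl rfl⟩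
        -- all other edges of p are in m by induction
        have hq_m : ∀ s t : E, (s, t) ∈ p → (s, t) ≠ (a, b) → (s, t) ∈ m := by
          intro s t hst hnst
          obtain ⟨has, htb⟩ := pji_rle he hU hst
          have : mu e (s, t) < mu e (a, b) := mu_strict he hIso hab_e hba has htb hnst
          exact IHn (mu e (s, t)) (lt_of_lt_of_le this hmu) s t (hpsub hst) le_rfl
        by_cases haxy : (a, b) ∈ x ∪ y
        · -- p is a regular closed subset of x (or y) and z, hence of the meet
          have hpz : p ⊆ z := fun q hq =>
            ((tint_subset e _ (hpsub hq)).2).2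
          rcases haxy with h | h
          · have hpx : p ⊆ x := by
              rintro ⟨s, t⟩ hst
              by_cases hst' : (s, t) = (a, b)
              · rw [hst']; exact h
              · exact hmx (hq_m s t hst hst')
            have : p ⊆ regMeet e x z := subset_regMeet hpreg hpx hpz
            exact this habp
          · have hpy : p ⊆ y := by
              rintro ⟨s, t⟩ hst
              by_cases hst' : (s, t) = (a, b)
              · rw [hst']; exact h
              · exact hmy (hq_m s t hst hst')
            have : p ⊆ regMeet e y z := subset_regMeet hpreg hpy hpz
            rw [hm]
            exact this habp
        · -- contradiction with (a,b) ∈ W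
          exfalso
          have hq : ∀ c d : E, (c, d) ∈ x ∪ y → c ∉ U → rle e a c → d ∈ U →
              (c, d) ∈ x ∩ y := by
            intro c d hcd hcU hac hdU
            have hcd_e : (c, d) ∈ e := hxy_sub hcd
            have hdb : rle e d b := (hU hdU).2
            have hcb : rle e c b := rle_trans he (Or.inl hcd_e) hdb
            have hcdp : (c, d) ∈ p := by
              rw [hpdef, mem_pji]
              refine ⟨hcd_e, ?_, Or.inr hdU⟩
              by_cases hca : c = a
              · exact Or.inl hca
              · exact Or.inr ⟨⟨hac, hcb⟩, hcU⟩
            have hne' : (c, d) ≠ (a, b) := by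
              intro h; rw [h] at hcd; exact haxy hcd
            have := hq_m c d hcdp hne'
            exact ⟨hmx this, hmy this⟩
          exact no_path he (regClosed_closed hx) (regClosed_closed hy) hx.1 hy.1
            hq haU hbU haxy hmem.1
  intro g hg
  obtain ⟨a, b⟩ := g
  exact main (mu e (a, b)) a b hg le_rfl


/-! ### Negative direction: witnesses -/

/-- Existence of a triple of regular closed sets witnessing failure of both
pseudocomplementedness and meet-semidistributivity. -/
def Wit (e : Set (E × E)) : Prop :=
  ∃ x y z : Set (E × E), RegClosed e x ∧ RegClosed e y ∧ RegClosed e z ∧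
    regMeet e x y = ∅ ∧ regMeet e x z = ∅ ∧ regMeet e x (regJoin y z) ≠ ∅

lemma regClosed_of_clopen (he : TransRel e) {p : Set (E × E)} (hsub : p ⊆ e)
    (hcl : TransRel p) (hop : TransRel (e \ p)) : RegClosed e p := by
  refine ⟨hsub, ?_⟩
  rw [tint_eq_self_of_clopen he hsub hop, tcl_eq_self hcl]

lemma intoSet_regClosed (he : TransRel e) (S : Set E) :
    RegClosed e {q ∈ e | q.2 ∈ S} := by
  apply regClosed_of_clopen he (fun q hq => hq.1)
  · intro a b c h1 h2
    exact ⟨he _ _ _ h1.1 h2.1, h2.2⟩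
  · intro a b c h1 h2
    refine ⟨he _ _ _ h1.1 h2.1, fun hp => ?_⟩
    exact h2.2 ⟨h2.1, hp.2⟩

lemma fromSet_regClosed (he : TransRel e) (S : Set E) :
    RegClosed e {q ∈ e | q.1 ∈ S} := by
  apply regClosed_of_clopen he (fun q hq => hq.1)
  · intro a b c h1 h2
    exact ⟨he _ _ _ h1.1 h2.1, h1.2⟩
  · intro a b c h1 h2
    refine ⟨he _ _ _ h1.1 h2.1, fun hp => ?_⟩
    exact h1.2 ⟨h1.1, hp.2⟩

/-- A witness triple destroys both lattice properties. -/
lemma wit_fails (he : TransRel e) (hW : Wit e) :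
    ¬ (∀ x y z : Set (E × E), RegClosed e x → RegClosed e y → RegClosed e z →
        (regJoin x z = regJoin y z → regJoin x z = regJoin (regMeet e x y) z) ∧
        (regMeet e x z = regMeet e y z → regMeet e x z = regMeet e (regJoin x y) z)) ∧
    ¬ (∀ x : Set (E × E), RegClosed e x →
        ∃ y, RegClosed e y ∧ regMeet e x y = ∅ ∧
          ∀ z, RegClosed e z → regMeet e x z = ∅ → z ⊆ y) := by
  obtain ⟨x, y, z, hx, hy, hz, h1, h2, h3⟩ := hW
  constructor
  · intro hSD
    have := (hSD y z x hy hz hx).2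
    rw [regMeet_comm e y x, regMeet_comm e z x] at this
    have h4 := this (by rw [h1, h2])
    rw [h1] at h4
    rw [regMeet_comm] at h4
    exact h3 h4.symm
  · intro hPC
    obtain ⟨g, hg, hmg, hgreat⟩ := hPC x hx
    have hyg : y ⊆ g := hgreat y hy h1
    have hzg : z ⊆ g := hgreat z hz h2
    have hjoin : regJoin y z ⊆ g := regJoin_subset (e := e) (regClosed_closed hg) hyg hzg
    have : regMeet e x (regJoin y z) ⊆ regMeet e x g := regMeet_mono_right hjoin
    rw [hmg] at this
    exact h3 (Set.eq_empty_of_subset_empty this)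

/-- N1: a "mutual triple" configuration yields a witness. -/
lemma wit_of_mutual (he : TransRel e) {u v w : E}
    (huv : u ≠ v) (hvw : v ≠ w) (huw : u ≠ w)
    (h1 : (u, v) ∈ e) (h2 : (v, u) ∈ e) (h3 : (v, w) ∈ e) (h4 : (w, u) ∈ e) :
    Wit e := by
  classical
  set X : Set (E × E) := {q ∈ e | q.2 ∈ ({u} : Set E)} with hX
  set Y : Set (E × E) := {q ∈ e | q.1 ∈ ({v} : Set E)} with hY
  set Z : Set (E × E) := {q ∈ e | q.2 ∈ ({v} : Set E)} with hZ
  refine ⟨X, Y, Z, intoSet_regClosed he {u}, fromSet_regClosed he {v},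
    intoSet_regClosed he {v}, ?_, ?_, ?_⟩
  · rw [regMeet_empty_iff]
    apply Set.eq_empty_iff_forall_notMem.mpr
    rintro ⟨s, t⟩ hq
    have hmem := (tint_subset e _ hq).2
    obtain ⟨⟨hse, ht⟩, ⟨_, hs⟩⟩ := hmem
    simp only [Set.mem_singleton_iff] at ht hs
    apply hq.2
    rw [show ((s, t) : E × E) = (v, u) by rw [ht, hs]]
    refine Relation.TransGen.trans (Relation.TransGen.single (b := w) ?_)
      (Relation.TransGen.single ?_)
    · refine ⟨h3, fun hc => ?_⟩
      have : w = u := by simpa [hX] using hc.1.2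
      exact huw this.symm
    · refine ⟨h4, fun hc => ?_⟩
      have : w = v := by simpa [hY] using hc.2.2
      exact hvw this.symm
  · rw [regMeet_empty_iff]
    apply Set.eq_empty_iff_forall_notMem.mpr
    rintro ⟨s, t⟩ hq
    have hmem := (tint_subset e _ hq).2
    obtain ⟨⟨_, ht⟩, ⟨_, hs⟩⟩ := hmem
    simp only [Set.mem_singleton_iff] at ht hs
    exact huv (ht ▸ hs ▸ rfl : u = v)
  · intro hcon
    have hvu_mem : ((v, u) : E × E) ∈ X ∩ tcl (Y ∪ Z) := by
      refine ⟨⟨h2, rfl⟩, subset_tcl _ (Or.inl ⟨h2, rfl⟩)⟩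
    have claim : ∀ t, Relation.TransGen
        (fun p q => ((p, q) : E × E) ∈ e \ (X ∩ tcl (Y ∪ Z))) v t → t ≠ u := by
      intro t ht
      induction ht with
      | single h =>
        rename_i t'
        intro heq
        rw [heq] at h
        exact h.2 hvu_mem
      | tail hs hst ih =>
        rename_i s t'
        intro heq
        rw [heq] at hst
        have hsu : (s, u) ∈ e := hst.1
        have hsv : (s, v) ∈ e := he _ _ _ hsu h1
        apply hst.2
        refine ⟨⟨hsu, rfl⟩, ?_⟩
        exact Relation.TransGen.trans
          (Relation.TransGen.single (Or.inr ⟨hsv, rfl⟩))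
          (Relation.TransGen.single (Or.inl ⟨h2, rfl⟩))
    have hvu_int : ((v, u) : E × E) ∈ tint e (X ∩ tcl (Y ∪ Z)) :=
      ⟨h2, fun hcl => claim u hcl rfl⟩
    have : ((v, u) : E × E) ∈ regMeet e X (regJoin Y Z) := subset_tcl _ hvu_int
    rw [hcon] at this
    exact this


/-- A cyclic pair with an element strictly above it, with no foreign elements in
between. -/
def UpConfig (e : Set (E × E)) : Prop :=
  ∃ u v w : E, u ≠ v ∧ (u, v) ∈ e ∧ (v, u) ∈ e ∧ (u, w) ∈ e ∧ (w, u) ∉ e ∧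
    ∀ s, (u, s) ∈ e → (s, w) ∈ e → s = u ∨ s = v ∨ (rle e w s ∧ rle e s w)

lemma wit_of_upConfig (he : TransRel e) (hcfg : UpConfig e) : Wit e := by
  classical
  obtain ⟨u, v, w, huv, h1, h2, h3, hwu, hInt⟩ := hcfg
  set D : Set E := {t | rle e w t ∧ rle e t w} with hD
  have hwD : w ∈ D := ⟨rle_refl w, rle_refl w⟩
  have huu : (u, u) ∈ e := he _ _ _ h1 h2
  have hvw : (v, w) ∈ e := he _ _ _ h2 h3
  have hwv : (w, v) ∉ e := fun h => hwu (he _ _ _ h h2)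
  have huD : u ∉ D := by
    rintro ⟨hw1, _⟩
    rcases hw1 with h | h
    · exact hwu h
    · exact hwu (by rw [h]; exact huu)
  have hvD : v ∉ D := by
    rintro ⟨hw1, _⟩
    rcases hw1 with h | h
    · exact hwv h
    · exact hwu (by rw [h]; exact h2)
  have hDe : ∀ d ∈ D, (u, d) ∈ e := by
    intro d hd
    rcases hd.1 with h | h
    · exact he _ _ _ h3 h
    · exact h ▸ h3
  have hDev : ∀ d ∈ D, (v, d) ∈ e := by
    intro d hd
    rcases hd.1 with h | h
    · exact he _ _ _ hvw h
    · exact h ▸ hvw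
  set X : Set (E × E) := {q ∈ e | q.2 ∈ D} with hX
  set Y : Set (E × E) := {q ∈ e | q.1 ∈ ({u} : Set E)} with hY
  set Z : Set (E × E) := {q ∈ e | q.1 ∈ ({v} : Set E)} with hZ
  refine ⟨X, Y, Z, intoSet_regClosed he D, fromSet_regClosed he {u},
    fromSet_regClosed he {v}, ?_, ?_, ?_⟩
  · rw [regMeet_empty_iff]
    apply Set.eq_empty_iff_forall_notMem.mpr
    rintro ⟨s, t⟩ hq
    obtain ⟨⟨hse, htD⟩, ⟨_, hsu⟩⟩ := (tint_subset e _ hq).2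
    simp only [Set.mem_singleton_iff] at hsu
    apply hq.2
    refine Relation.TransGen.trans (Relation.TransGen.single (b := v) ?_)
      (Relation.TransGen.single ?_)
    · refine ⟨by rw [hsu]; exact h1, fun hc => hvD hc.1.2⟩
    · refine ⟨hDev t htD, fun hc => ?_⟩
      have : v = u := by simpa using hc.2.2
      exact huv this.symm
  · rw [regMeet_empty_iff]
    apply Set.eq_empty_iff_forall_notMem.mpr
    rintro ⟨s, t⟩ hq
    obtain ⟨⟨hse, htD⟩, ⟨_, hsv⟩⟩ := (tint_subset e _ hq).2
    simp only [Set.mem_singleton_iff] at hsv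
    apply hq.2
    refine Relation.TransGen.trans (Relation.TransGen.single (b := u) ?_)
      (Relation.TransGen.single ?_)
    · refine ⟨by rw [hsv]; exact h2, fun hc => huD hc.1.2⟩
    · refine ⟨hDe t htD, fun hc => ?_⟩
      have : u = v := by simpa using hc.2.2
      exact huv this
  · intro hcon
    have huw_mem : ((u, w) : E × E) ∈ X ∩ tcl (Y ∪ Z) :=
      ⟨⟨h3, hwD⟩, subset_tcl _ (Or.inl ⟨h3, rfl⟩)⟩
    have claim : ∀ t, Relation.TransGen
        (fun p q => ((p, q) : E × E) ∈ e \ (X ∩ tcl (Y ∪ Z))) u t → t ∉ D := by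
      intro t ht
      induction ht with
      | single h =>
        rename_i t'
        intro ht'D
        exact h.2 ⟨⟨h.1, ht'D⟩, subset_tcl _ (Or.inl ⟨h.1, rfl⟩)⟩
      | tail hs hst ih =>
        rename_i s t'
        intro ht'D
        have hus : (u, s) ∈ e := transGen_mem_e he Set.diff_subset hs
        have hsw : (s, w) ∈ e := by
          rcases ht'D.2 with h | h
          · exact he _ _ _ hst.1 h
          · exact h ▸ hst.1
        rcases hInt s hus hsw with heq | heq | hsD
        · apply hst.2
          refine ⟨⟨hst.1, ht'D⟩, subset_tcl _ (Or.inl ⟨hst.1, by rw [heq]; rfl⟩)⟩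
        · apply hst.2
          refine ⟨⟨hst.1, ht'D⟩, subset_tcl _ (Or.inr ⟨hst.1, by rw [heq]; rfl⟩)⟩
        · exact ih hsD
    have huw_int : ((u, w) : E × E) ∈ tint e (X ∩ tcl (Y ∪ Z)) :=
      ⟨h3, fun hcl => claim w hcl hwD⟩
    have : ((u, w) : E × E) ∈ regMeet e X (regJoin Y Z) := subset_tcl _ huw_int
    rw [hcon] at this
    exact this


/-! ### Swap transport -/

def swp (s : Set (E × E)) : Set (E × E) := {q | (q.2, q.1) ∈ s}

lemma swp_swp (s : Set (E × E)) : swp (swp s) = s := by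
  ext ⟨a, b⟩; rfl

lemma transRel_swp {s : Set (E × E)} (hs : TransRel s) : TransRel (swp s) :=
  fun x y z h1 h2 => hs z y x h2 h1

lemma swp_diff (a b : Set (E × E)) : swp (a \ b) = swp a \ swp b := rfl

lemma swp_inter (a b : Set (E × E)) : swp (a ∩ b) = swp a ∩ swp b := rfl

lemma swp_union (a b : Set (E × E)) : swp (a ∪ b) = swp a ∪ swp b := rfl

lemma swp_empty : swp (∅ : Set (E × E)) = ∅ := rfl

lemma transGen_flip {r : E → E → Prop} {a b : E}
    (h : Relation.TransGen (fun u v => r v u) a b) : Relation.TransGen r b a := by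
  induction h with
  | single h => exact Relation.TransGen.single h
  | tail _ hst ih => exact Relation.TransGen.head hst ih

lemma tcl_swp (s : Set (E × E)) : tcl (swp s) = swp (tcl s) := by
  ext ⟨a, b⟩
  constructor
  · intro h
    exact transGen_flip (r := fun u v => (u, v) ∈ s) h
  · intro h
    exact transGen_flip (r := fun u v => (v, u) ∈ s) h

lemma tint_swp (e s : Set (E × E)) : tint (swp e) (swp s) = swp (tint e s) := by
  show swp e \ tcl (swp e \ swp s) = swp (e \ tcl (e \ s))
  rw [← swp_diff e s, tcl_swp, ← swp_diff]

lemma regClosed_swp {e x : Set (E × E)} (hx : RegClosed e x) :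
    RegClosed (swp e) (swp x) := by
  refine ⟨fun q hq => hx.1 hq, ?_⟩
  rw [tint_swp, tcl_swp]
  exact congrArg swp hx.2

lemma regMeet_swp (e x y : Set (E × E)) :
    regMeet (swp e) (swp x) (swp y) = swp (regMeet e x y) := by
  unfold regMeet
  rw [← swp_inter, tint_swp, tcl_swp]

lemma regJoin_swp (x y : Set (E × E)) :
    regJoin (swp x) (swp y) = swp (regJoin x y) := by
  unfold regJoin
  rw [← swp_union, tcl_swp]

lemma wit_swp {e : Set (E × E)} (h : Wit (swp e)) : Wit e := by
  obtain ⟨x, y, z, hx, hy, hz, h1, h2, h3⟩ := h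
  have cast : ∀ w : Set (E × E), RegClosed (swp e) w → RegClosed e (swp w) := by
    intro w hw
    have := regClosed_swp hw
    rwa [swp_swp] at this
  refine ⟨swp x, swp y, swp z, cast x hx, cast y hy, cast z hz, ?_, ?_, ?_⟩
  · have := regMeet_swp (swp e) x y
    rw [swp_swp] at this
    rw [this, h1, swp_empty]
  · have := regMeet_swp (swp e) x z
    rw [swp_swp] at this
    rw [this, h2, swp_empty]
  · have hj := regJoin_swp y z
    have := regMeet_swp (swp e) x (regJoin y z)
    rw [swp_swp] at this
    rw [hj, this]
    intro hcon
    apply h3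
    have := congrArg swp hcon
    rwa [swp_swp, swp_empty] at this

/-! ### Extraction of a configuration from the failure of condition C -/

def Mutual (e : Set (E × E)) : Prop :=
  ∃ u v w : E, u ≠ v ∧ v ≠ w ∧ u ≠ w ∧ (u, v) ∈ e ∧ (v, u) ∈ e ∧ (v, w) ∈ e ∧
    (w, v) ∈ e ∧ (u, w) ∈ e ∧ (w, u) ∈ e

lemma mutual_swp {e : Set (E × E)} (h : Mutual (swp e)) : Mutual e := by
  obtain ⟨u, v, w, h1, h2, h3, e1, e2, e3, e4, e5, e6⟩ := h
  exact ⟨u, v, w, h1, h2, h3, e2, e1, e4, e3, e6, e5⟩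

lemma upconfig_of_btriple [Finite E] (he : TransRel e) (hnM : ¬ Mutual e)
    {u0 v0 w0 : E} (huv : u0 ≠ v0) (h1 : (u0, v0) ∈ e) (h2 : (v0, u0) ∈ e)
    (h3 : (u0, w0) ∈ e) (hwu : (w0, u0) ∉ e) : UpConfig e := by
  have main : ∀ n : ℕ, ∀ u v w : E, u ≠ v → (u, v) ∈ e → (v, u) ∈ e →
      (u, w) ∈ e → (w, u) ∉ e → mu e (u, w) ≤ n → UpConfig e := by
    intro n
    induction n using Nat.strong_induction_on with
    | _ n IH =>
      intro u v w huv h1 h2 h3 hwu hle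
      by_cases hint : ∀ s, (u, s) ∈ e → (s, w) ∈ e →
          s = u ∨ s = v ∨ (rle e w s ∧ rle e s w)
      · exact ⟨u, v, w, huv, h1, h2, h3, hwu, hint⟩
      · push_neg at hint
        obtain ⟨s, hus, hsw, hsu, hsv, hsD⟩ := hint
        have hsu_e : (s, u) ∉ e := by
          intro hsue
          apply hnM
          refine ⟨u, v, s, huv, fun h => hsv h.symm, fun h => hsu h.symm,
            h1, h2, he _ _ _ h2 hus, he _ _ _ hsue h1, hus, hsue⟩
        have hlt : mu e (u, s) < mu e (u, w) := by
          apply Set.ncard_lt_ncard _ (Set.toFinite _)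
          constructor
          · rintro t ⟨ht1, ht2⟩
            exact ⟨ht1, rle_trans he ht2 (Or.inl hsw)⟩
          · intro hall
            have hw : w ∈ cce e u s :=
              hall (show w ∈ cce e u w from ⟨Or.inl h3, rle_refl w⟩)
            exact hsD hw.2 (Or.inl hsw)
        exact IH (mu e (u, s)) (lt_of_lt_of_le hlt hle) u v s huv h1 h2 hus hsu_e le_rfl
  exact main (mu e (u0, w0)) u0 v0 w0 huv h1 h2 h3 hwu le_rfl

lemma eqv_escape (he : TransRel e) {u v : E} (h1 : (u, v) ∈ e) (h2 : (v, u) ∈ e) :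
    ∀ p q, Relation.EqvGen (fun s t => (s, t) ∈ e) p q →
      ((p = u ∨ p = v) → (q = u ∨ q = v) ∨
        ∃ w', w' ≠ u ∧ w' ≠ v ∧ ((u, w') ∈ e ∨ (w', u) ∈ e)) ∧
      ((q = u ∨ q = v) → (p = u ∨ p = v) ∨
        ∃ w', w' ≠ u ∧ w' ≠ v ∧ ((u, w') ∈ e ∨ (w', u) ∈ e)) := by
  intro p q h
  induction h with
  | rel p q hpq =>
    constructor
    · intro hp
      by_cases hq : q = u ∨ q = v
      · exact Or.inl hq
      · push_neg at hq
        refine Or.inr ⟨q, hq.1, hq.2, Or.inl ?_⟩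
        rcases hp with rfl | rfl
        · exact hpq
        · exact he _ _ _ h1 hpq
    · intro hq
      by_cases hp : p = u ∨ p = v
      · exact Or.inl hp
      · push_neg at hp
        refine Or.inr ⟨p, hp.1, hp.2, Or.inr ?_⟩
        rcases hq with rfl | rfl
        · exact hpq
        · exact he _ _ _ hpq h2
  | refl p => exact ⟨fun h => Or.inl h, fun h => Or.inl h⟩
  | symm p q _ ih => exact ⟨ih.2, ih.1⟩
  | trans p q r _ _ ih1 ih2 =>
    constructor
    · intro hp
      rcases ih1.1 hp with h | h
      · exact ih2.1 h
      · exact Or.inr h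
    · intro hr
      rcases ih2.2 hr with h | h
      · exact ih1.2 h
      · exact Or.inr h

lemma wit_of_not_condC [Finite E] (he : TransRel e) (h : ¬ CondC e) : Wit e := by
  classical
  by_cases hM : Mutual e
  · obtain ⟨u, v, w, d1, d2, d3, e1, e2, e3, _, _, e6⟩ := hM
    exact wit_of_mutual he d1 d2 d3 e1 e2 e3 e6
  -- no mutual triple
  rw [CondC] at h
  push_neg at h
  obtain ⟨c, hA, hB⟩ := h
  obtain ⟨u, v, hcu, hcv, huve, hvue, huv⟩ := hA
  have hset_ne : {x | Relation.EqvGen (fun s t => (s, t) ∈ e) c x} ≠ {u, v} :=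
    fun hEq => hB u v huv hEq huve hvue
  have hex : ∃ w0, Relation.EqvGen (fun s t => (s, t) ∈ e) c w0 ∧ w0 ≠ u ∧ w0 ≠ v := by
    by_contra hc
    push_neg at hc
    apply hset_ne
    ext t
    simp only [Set.mem_setOf_eq, Set.mem_insert_iff, Set.mem_singleton_iff]
    constructor
    · intro ht
      by_cases h1' : t = u
      · exact Or.inl h1'
      · exact Or.inr (hc t ht h1')
    · rintro (rfl | rfl)
      · exact hcu
      · exact hcv
  obtain ⟨w0, hcw, hw0u, hw0v⟩ := hex
  have hEuw : Relation.EqvGen (fun s t => (s, t) ∈ e) u w0 :=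
    Relation.EqvGen.trans _ _ _ (Relation.EqvGen.symm _ _ hcu) hcw
  have hescape := (eqv_escape he huve hvue u w0 hEuw).1 (Or.inl rfl)
  rcases hescape with h | ⟨w', hw'u, hw'v, hedge⟩
  · rcases h with h | h
    · exact absurd h hw0u
    · exact absurd h hw0v
  · rcases hedge with huw' | hw'u_e
    · by_cases hback : (w', u) ∈ e
      · exact absurd ⟨u, v, w', huv, fun h => hw'v h.symm, fun h => hw'u h.symm,
          huve, hvue, he _ _ _ hvue huw', he _ _ _ hback huve, huw', hback⟩ hM
      · exact wit_of_upConfig he (upconfig_of_btriple he hM huv huve hvue huw' hback)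
    · by_cases hfwd : (u, w') ∈ e
      · exact absurd ⟨u, v, w', huv, fun h => hw'v h.symm, fun h => hw'u h.symm,
          huve, hvue, he _ _ _ hvue hfwd, he _ _ _ hw'u_e huve, hfwd, hw'u_e⟩ hM
      · apply wit_swp
        have he' : TransRel (swp e) := transRel_swp he
        have hM' : ¬ Mutual (swp e) := fun h => hM (mutual_swp h)
        apply wit_of_upConfig he'
        exact upconfig_of_btriple he' hM' (u0 := u) (v0 := v) (w0 := w') huv
          (show (v, u) ∈ e from hvue) (show (u, v) ∈ e from huve)
          (show (w', u) ∈ e from hw'u_e) (show ((w', u) : E × E) ∉ swp e from hfwd)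

end RegWork

/-- for a transitive relation `e` on a finite set, `Reg(e)` is semidistributive
iff it is pseudocomplemented, iff every connected component of the preorder `⊴` is either
antisymmetric or a two-element set `{a,b}` with `(a,b) ∈ e` and `(b,a) ∈ e`. -/
theorem regClosed_semidistrib_iff_pseudocomplemented_iff {E : Type*} [Finite E]
    (e : Set (E × E)) (he : TransRel e) :
    ((∀ x y z : Set (E × E), RegClosed e x → RegClosed e y → RegClosed e z →
        (regJoin x z = regJoin y z → regJoin x z = regJoin (regMeet e x y) z) ∧
        (regMeet e x z = regMeet e y z → regMeet e x z = regMeet e (regJoin x y) z)) ↔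
      (∀ c : E,
        (∀ u v : E, Relation.EqvGen (fun s t => (s, t) ∈ e) c u →
          Relation.EqvGen (fun s t => (s, t) ∈ e) c v →
          (u, v) ∈ e → (v, u) ∈ e → u = v) ∨
        (∃ a b : E, a ≠ b ∧ {x | Relation.EqvGen (fun s t => (s, t) ∈ e) c x} = {a, b} ∧
          (a, b) ∈ e ∧ (b, a) ∈ e))) ∧
    ((∀ x : Set (E × E), RegClosed e x →
        ∃ y, RegClosed e y ∧ regMeet e x y = ∅ ∧
          ∀ z, RegClosed e z → regMeet e x z = ∅ → z ⊆ y) ↔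
      (∀ c : E,
        (∀ u v : E, Relation.EqvGen (fun s t => (s, t) ∈ e) c u →
          Relation.EqvGen (fun s t => (s, t) ∈ e) c v →
          (u, v) ∈ e → (v, u) ∈ e → u = v) ∨
        (∃ a b : E, a ≠ b ∧ {x | Relation.EqvGen (fun s t => (s, t) ∈ e) c x} = {a, b} ∧
          (a, b) ∈ e ∧ (b, a) ∈ e))) := by
  classical
  constructor
  · constructor
    · intro hSD
      by_contra hC
      exact (RegWork.wit_fails he (RegWork.wit_of_not_condC he hC)).1 hSD
    · intro hC x y z hx hy hz
      refine ⟨fun h => RegWork.sdjoin_of_sdmeet he ?_ hx hy hz h,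
        fun h => RegWork.sdmeet_key he hC hx hy hz h⟩
      intro x' y' z' hx' hy' hz' h'
      exact RegWork.sdmeet_key he hC hx' hy' hz' h'
  · constructor
    · intro hPC
      by_contra hC
      exact (RegWork.wit_fails he (RegWork.wit_of_not_condC he hC)).2 hPC
    · intro hC
      exact RegWork.pos_pc he hC
end

section
/- Let e be a transitive relation on a set E. (i) A subset x ⊆ e is regular closed if and only if x = cl(u) for some open subset u of e. (ii) For every family (aᵢ) of regular closed subsets of e, the set cl(⋃ᵢ aᵢ) is the least regular closed subset of e containing every aᵢ, and cl(int(⋂ᵢ aᵢ)) is the greatest regular closed subset of e contained in every aᵢ; hence Reg(e), ordered by inclusion, is a complete lattice. -/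
section Aux

variable {E : Type*}

lemma aux_subset_tcl (a : Set (E × E)) : a ⊆ tcl a := fun p hp => by
  exact Relation.TransGen.single (show (p.1, p.2) ∈ a from hp)

lemma aux_trans_tcl (a : Set (E × E)) : TransRel (tcl a) := fun _ _ _ hxy hyz =>
  Relation.TransGen.trans hxy hyz

lemma aux_tcl_min {a b : Set (E × E)} (hb : TransRel b) (h : a ⊆ b) : tcl a ⊆ b := by
  have key : ∀ x y : E, Relation.TransGen (fun u v => (u, v) ∈ a) x y → (x, y) ∈ b := by
    intro x y hp
    induction hp with
    | single h' => exact h h'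
    | tail _ h' ih => exact hb _ _ _ ih (h h')
  exact fun p hp => key p.1 p.2 hp

lemma aux_tcl_mono {a b : Set (E × E)} (h : a ⊆ b) : tcl a ⊆ tcl b :=
  aux_tcl_min (aux_trans_tcl b) (h.trans (aux_subset_tcl b))

lemma aux_tcl_idem (a : Set (E × E)) : tcl (tcl a) = tcl a :=
  Set.Subset.antisymm (aux_tcl_min (aux_trans_tcl a) subset_rfl) (aux_subset_tcl _)

lemma aux_tint_subset (e a : Set (E × E)) : tint e a ⊆ a := fun p hp => by
  have h1 : p ∈ e := hp.1
  have h2 : p ∉ e \ a := fun h => hp.2 (aux_subset_tcl _ h)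
  by_contra h
  exact h2 ⟨h1, h⟩

lemma aux_tint_mono (e : Set (E × E)) {a b : Set (E × E)} (h : a ⊆ b) :
    tint e a ⊆ tint e b :=
  Set.diff_subset_diff_right (aux_tcl_mono (Set.diff_subset_diff_right h))

lemma aux_tcl_subset_e {e a : Set (E × E)} (he : TransRel e) (h : a ⊆ e) : tcl a ⊆ e :=
  aux_tcl_min he h

lemma aux_tint_open {e : Set (E × E)} (he : TransRel e) (a : Set (E × E)) :
    IsOpenIn e (tint e a) := by
  refine ⟨Set.diff_subset, ?_⟩
  have h : e \ tint e a = tcl (e \ a) :=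
    Set.diff_diff_cancel_left (aux_tcl_subset_e he Set.diff_subset)
  rw [h]
  exact aux_trans_tcl _

lemma aux_open_subset_tint {e u : Set (E × E)} (hu : IsOpenIn e u) :
    u ⊆ tint e (tcl u) := by
  intro p hp
  refine ⟨hu.1 hp, fun h => ?_⟩
  have h1 : tcl (e \ tcl u) ⊆ e \ u :=
    aux_tcl_min hu.2 (Set.diff_subset_diff_right (aux_subset_tcl u))
  exact (h1 h).2 hp

lemma aux_regClosed_tcl_open {e u : Set (E × E)} (he : TransRel e) (hu : IsOpenIn e u) :
    RegClosed e (tcl u) := by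
  refine ⟨aux_tcl_subset_e he hu.1, Set.Subset.antisymm ?_ ?_⟩
  · exact aux_tcl_mono (aux_open_subset_tint hu)
  · exact (aux_tcl_mono (aux_tint_subset e _)).trans (aux_tcl_idem u).subset

lemma aux_regClosed_trans {e b : Set (E × E)} (hb : RegClosed e b) : TransRel b := by
  rw [hb.2]; exact aux_trans_tcl _

end Aux

/-- (i) a subset of `e` is regular closed iff it is the transitive closure of an
open set; (ii) for any family of regular closed sets, `cl` of the union is the least regular
closed set containing all of them and `cl(int(⋂))` is the greatest regular closed set
contained in all of them; hence `Reg(e)` is a complete lattice. -/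
theorem regClosed_complete_lattice {E : Type*} (e : Set (E × E)) (he : TransRel e) :
    (∀ x : Set (E × E), x ⊆ e → (RegClosed e x ↔ ∃ u, IsOpenIn e u ∧ x = tcl u)) ∧
    (∀ {ι : Type*} (a : ι → Set (E × E)), (∀ i, RegClosed e (a i)) →
      (RegClosed e (tcl (⋃ i, a i)) ∧ (∀ i, a i ⊆ tcl (⋃ i, a i)) ∧
        (∀ b, RegClosed e b → (∀ i, a i ⊆ b) → tcl (⋃ i, a i) ⊆ b)) ∧
      (RegClosed e (tcl (tint e (⋂ i, a i))) ∧ (∀ i, tcl (tint e (⋂ i, a i)) ⊆ a i) ∧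
        (∀ b, RegClosed e b → (∀ i, b ⊆ a i) → b ⊆ tcl (tint e (⋂ i, a i))))) := by
  constructor
  · intro x hx
    constructor
    · intro hreg
      exact ⟨tint e x, aux_tint_open he x, hreg.2⟩
    · rintro ⟨u, hu, rfl⟩
      exact aux_regClosed_tcl_open he hu
  · intro ι a ha
    constructor
    · -- supremum
      have hunion : tcl (⋃ i, a i) = tcl (⋃ i, tint e (a i)) := by
        apply Set.Subset.antisymm
        · rw [← aux_tcl_idem (⋃ i, tint e (a i))]
          apply aux_tcl_mono
          apply Set.iUnion_subset
          intro i
          rw [(ha i).2]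
          exact aux_tcl_mono (Set.subset_iUnion (fun j => tint e (a j)) i)
        · exact aux_tcl_mono (Set.iUnion_subset fun i => (aux_tint_subset e (a i)).trans
            (Set.subset_iUnion a i))
      have hopen : IsOpenIn e (⋃ i, tint e (a i)) := by
        refine ⟨Set.iUnion_subset fun i => Set.diff_subset, ?_⟩
        intro x y z hxy hyz
        have hx : ∀ i, (x, y) ∈ e \ tint e (a i) :=
          fun i => ⟨hxy.1, fun h => hxy.2 (Set.mem_iUnion.2 ⟨i, h⟩)⟩
        have hy : ∀ i, (y, z) ∈ e \ tint e (a i) :=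
          fun i => ⟨hyz.1, fun h => hyz.2 (Set.mem_iUnion.2 ⟨i, h⟩)⟩
        refine ⟨he _ _ _ hxy.1 hyz.1, fun h => ?_⟩
        obtain ⟨i, hi⟩ := Set.mem_iUnion.1 h
        exact ((aux_tint_open he (a i)).2 x y z (hx i) (hy i)).2 hi
      refine ⟨?_, ?_, ?_⟩
      · rw [hunion]; exact aux_regClosed_tcl_open he hopen
      · intro i
        exact (Set.subset_iUnion a i).trans (aux_subset_tcl _)
      · intro b hb hab
        exact aux_tcl_min (aux_regClosed_trans hb) (Set.iUnion_subset hab)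
    · -- infimum
      refine ⟨aux_regClosed_tcl_open he (aux_tint_open he _), ?_, ?_⟩
      · intro i
        rw [(ha i).2]
        exact aux_tcl_mono (aux_tint_mono e (Set.iInter_subset a i))
      · intro b hb hab
        rw [hb.2]
        exact aux_tcl_mono (aux_tint_mono e (Set.subset_iInter hab))
end

section
/- Let e be a transitive relation on a set E and suppose there exist pairwise distinct elements a₀, a₁, b ∈ E such that (a₀,a₁) ∈ e, (a₁,a₀) ∈ e, and either (b,a₀) ∈ e or (a₀,b) ∈ e. Then there exist clopen subsets a₀', a₁', c of e such that int(a₀' ∩ c) = ∅, int(a₁' ∩ c) = ∅, c ≠ ∅, and c ⊆ a₀' ∪ a₁'. (Hence the meets of c with a₀' and with a₁' in Reg(e) are both ∅ while the meet of c with the join of a₀' and a₁' is nonzero, so Reg(e) is neither meet-semidistributive nor pseudocomplemented.) -/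

private lemma transRel_swap' {E : Type*} {a : Set (E × E)} (h : TransRel a) :
    TransRel (Prod.swap ⁻¹' a) := fun x y z hxy hyz => h z y x hyz hxy

private lemma tcl_swap' {E : Type*} (a : Set (E × E)) :
    tcl (Prod.swap ⁻¹' a) = Prod.swap ⁻¹' tcl a := by
  ext ⟨x, y⟩
  simp only [tcl, Set.mem_setOf_eq, Set.mem_preimage, Prod.swap_prod_mk]
  exact Relation.transGen_swap

private lemma tint_swap' {E : Type*} (e a : Set (E × E)) :
    tint (Prod.swap ⁻¹' e) (Prod.swap ⁻¹' a) = Prod.swap ⁻¹' tint e a := by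
  unfold tint
  rw [← Set.preimage_diff, tcl_swap', ← Set.preimage_diff]

private lemma clopen_swap' {E : Type*} {e x : Set (E × E)}
    (h : IsClopenIn (Prod.swap ⁻¹' e) x) : IsClopenIn e (Prod.swap ⁻¹' x) := by
  obtain ⟨h1, h2, h3⟩ := h
  refine ⟨fun p hp => h1 hp, transRel_swap' h2, ?_⟩
  have := transRel_swap' h3
  rwa [Set.preimage_diff] at this

private lemma swap_swap_preimage' {E : Type*} (s : Set (E × E)) :
    Prod.swap ⁻¹' (Prod.swap ⁻¹' s) = s := rfl

lemma key_below {E : Type*} (e : Set (E × E)) (he : TransRel e) (a₀ a₁ b : E)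
    (h01 : a₀ ≠ a₁) (h0b : a₀ ≠ b) (h1b : a₁ ≠ b)
    (ha : (a₀, a₁) ∈ e) (ha' : (a₁, a₀) ∈ e) (hb : (b, a₀) ∈ e) :
    ∃ x₀ x₁ c : Set (E × E), IsClopenIn e x₀ ∧ IsClopenIn e x₁ ∧ IsClopenIn e c ∧
      tint e (x₀ ∩ c) = ∅ ∧ tint e (x₁ ∩ c) = ∅ ∧ c ≠ ∅ ∧ c ⊆ x₀ ∪ x₁ := by
  set x₀ : Set (E × E) := {p ∈ e | p.2 = a₀ ∧ p.1 ≠ a₀ ∧ rle e b p.1} with hx₀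
  set x₁ : Set (E × E) := {p ∈ e | p.2 = a₁ ∧ p.1 ≠ a₁ ∧ rle e b p.1} with hx₁
  set c : Set (E × E) :=
    {p ∈ e | (p.2 = a₀ ∨ p.2 = a₁) ∧ rle e b p.1 ∧ (p.1, a₀) ∈ e ∧ p.1 ≠ a₀ ∧ p.1 ≠ a₁}
    with hc
  -- basic facts
  have hba₁ : (b, a₁) ∈ e := he b a₀ a₁ hb ha
  -- b ⊴ x and (x,y) ∈ e implies b ⊴ y (indeed (b,y) ∈ e)
  have hstep : ∀ x y : E, rle e b x → (x, y) ∈ e → (b, y) ∈ e := by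
    rintro x y (hbx | rfl) hxy
    · exact he b x y hbx hxy
    · exact hxy
  refine ⟨x₀, x₁, c, ?_, ?_, ?_, ?_, ?_, ?_, ?_⟩
  · -- x₀ clopen
    refine ⟨fun p hp => hp.1, ?_, ?_⟩
    · rintro x y z ⟨-, hy, -, -⟩ ⟨-, -, hy', -⟩
      exact absurd hy hy'
    · rintro x y z ⟨hxy, hxy'⟩ ⟨hyz, hyz'⟩
      refine ⟨he x y z hxy hyz, fun hmem => ?_⟩
      obtain ⟨hxz, hz, hx, hbx⟩ := hmem
      have hby : rle e b y := Or.inl (hstep x y hbx hxy)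
      have hy : y = a₀ := by
        by_contra hy
        exact hyz' ⟨hyz, hz, hy, hby⟩
      exact hxy' ⟨hxy, hy, hy ▸ hx, hbx⟩
  · -- x₁ clopen
    refine ⟨fun p hp => hp.1, ?_, ?_⟩
    · rintro x y z ⟨-, hy, -, -⟩ ⟨-, -, hy', -⟩
      exact absurd hy hy'
    · rintro x y z ⟨hxy, hxy'⟩ ⟨hyz, hyz'⟩
      refine ⟨he x y z hxy hyz, fun hmem => ?_⟩
      obtain ⟨hxz, hz, hx, hbx⟩ := hmem
      have hby : rle e b y := Or.inl (hstep x y hbx hxy)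
      have hy : y = a₁ := by
        by_contra hy
        exact hyz' ⟨hyz, hz, hy, hby⟩
      exact hxy' ⟨hxy, hy, hy ▸ hx, hbx⟩
  · -- c clopen
    refine ⟨fun p hp => hp.1, ?_, ?_⟩
    · rintro x y z ⟨-, hy, -, -, hy0, hy1⟩ ⟨-, -, -, -, hy0', hy1'⟩
      rcases hy with h | h
      · exact absurd h hy0'
      · exact absurd h hy1'
    · rintro x y z ⟨hxy, hxy'⟩ ⟨hyz, hyz'⟩
      refine ⟨he x y z hxy hyz, fun hmem => ?_⟩
      obtain ⟨hxz, hz, hbx, hxa₀, hx0, hx1⟩ := hmem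
      have hby : rle e b y := Or.inl (hstep x y hbx hxy)
      have hya₀ : (y, a₀) ∈ e := by
        rcases hz with h | h
        · exact h ▸ hyz
        · exact he y a₁ a₀ (h ▸ hyz) ha'
      have : y = a₀ ∨ y = a₁ := by
        by_contra hy
        push_neg at hy
        exact hyz' ⟨hyz, hz, hby, hya₀, hy.1, hy.2⟩
      exact hxy' ⟨hxy, this, hbx, hxa₀, hx0, hx1⟩
  · -- tint e (x₀ ∩ c) = ∅
    rw [Set.eq_empty_iff_forall_notMem]
    rintro ⟨u, v⟩ ⟨huv, hncl⟩
    apply hncl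
    by_cases hmem : (u, v) ∈ x₀ ∩ c
    · obtain ⟨⟨-, hv, -, -⟩, ⟨-, -, hbu, hua₀, hu0, hu1⟩⟩ := hmem
      have h1 : (u, a₁) ∈ e \ (x₀ ∩ c) := by
        refine ⟨he u a₀ a₁ hua₀ ha, fun hm => ?_⟩
        exact h01 hm.1.2.1.symm
      have h2 : (a₁, a₀) ∈ e \ (x₀ ∩ c) := by
        refine ⟨ha', fun hm => ?_⟩
        exact hm.2.2.2.2.2.2 rfl
      have hv' : v = a₀ := hv
      show Relation.TransGen _ u v
      rw [hv']
      exact Relation.TransGen.tail (Relation.TransGen.single h1) h2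
    · exact Relation.TransGen.single ⟨huv, hmem⟩
  · -- tint e (x₁ ∩ c) = ∅
    rw [Set.eq_empty_iff_forall_notMem]
    rintro ⟨u, v⟩ ⟨huv, hncl⟩
    apply hncl
    by_cases hmem : (u, v) ∈ x₁ ∩ c
    · obtain ⟨⟨-, hv, -, -⟩, ⟨-, -, hbu, hua₀, hu0, hu1⟩⟩ := hmem
      have h1 : (u, a₀) ∈ e \ (x₁ ∩ c) := by
        refine ⟨hua₀, fun hm => ?_⟩
        exact h01 hm.1.2.1
      have h2 : (a₀, a₁) ∈ e \ (x₁ ∩ c) := by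
        refine ⟨ha, fun hm => ?_⟩
        exact hm.2.2.2.2.2.1 rfl
      have hv' : v = a₁ := hv
      show Relation.TransGen _ u v
      rw [hv']
      exact Relation.TransGen.tail (Relation.TransGen.single h1) h2
    · exact Relation.TransGen.single ⟨huv, hmem⟩
  · -- c ≠ ∅
    intro h
    have : (b, a₀) ∈ c :=
      ⟨hb, Or.inl rfl, Or.inr rfl, hb, fun h' => h0b h'.symm, fun h' => h1b h'.symm⟩
    rw [h] at this
    exact this
  · -- c ⊆ x₀ ∪ x₁
    rintro ⟨x, y⟩ ⟨hxy, hy, hbx, hxa₀, hx0, hx1⟩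
    rcases hy with rfl | rfl
    · exact Or.inl ⟨hxy, rfl, hx0, hbx⟩
    · exact Or.inr ⟨hxy, rfl, hx1, hbx⟩

/-- if `e` has pairwise distinct `a₀, a₁, b` with `a₀ ≡ a₁` and `b ◁ a₀` or
`a₀ ◁ b`, then there are clopen sets `x₀, x₁, c` with `int(x₀ ∩ c) = int(x₁ ∩ c) = ∅`,
`c ≠ ∅`, and `c ⊆ x₀ ∪ x₁`; so `Reg(e)` is neither meet-semidistributive nor
pseudocomplemented. -/
theorem exists_clopen_witness_nonpseudocomplemented {E : Type*} (e : Set (E × E))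
    (he : TransRel e) (a₀ a₁ b : E)
    (h01 : a₀ ≠ a₁) (h0b : a₀ ≠ b) (h1b : a₁ ≠ b)
    (ha : (a₀, a₁) ∈ e) (ha' : (a₁, a₀) ∈ e)
    (hb : (b, a₀) ∈ e ∨ (a₀, b) ∈ e) :
    ∃ x₀ x₁ c : Set (E × E), IsClopenIn e x₀ ∧ IsClopenIn e x₁ ∧ IsClopenIn e c ∧
      tint e (x₀ ∩ c) = ∅ ∧ tint e (x₁ ∩ c) = ∅ ∧ c ≠ ∅ ∧ c ⊆ x₀ ∪ x₁ := by
  rcases hb with hb | hb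
  · exact key_below e he a₀ a₁ b h01 h0b h1b ha ha' hb
  · obtain ⟨x₀, x₁, c, hx₀, hx₁, hc, ht₀, ht₁, hne, hsub⟩ :=
      key_below (Prod.swap ⁻¹' e) (transRel_swap' he) a₀ a₁ b h01 h0b h1b ha' ha hb
    refine ⟨Prod.swap ⁻¹' x₀, Prod.swap ⁻¹' x₁, Prod.swap ⁻¹' c,
      clopen_swap' hx₀, clopen_swap' hx₁, clopen_swap' hc, ?_, ?_, ?_, ?_⟩
    · rw [← Set.preimage_inter, ← swap_swap_preimage' e, tint_swap', ht₀,
        Set.preimage_empty]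
    · rw [← Set.preimage_inter, ← swap_swap_preimage' e, tint_swap', ht₁,
        Set.preimage_empty]
    · intro h
      exact hne (by rw [← swap_swap_preimage' c, h, Set.preimage_empty])
    · intro p hp
      exact (hsub hp).imp id id
end

section
/- Let e be a square-free transitive relation on a set E. Then for every closed subset a of e, the interior int(a) is closed; dually, for every open subset a of e, the transitive closure cl(a) is open. -/

private lemma tg_mem {E : Type*} {e a : Set (E × E)} (he : TransRel e) {x z : E}
    (h : Relation.TransGen (fun u v => (u, v) ∈ e \ a) x z) : (x, z) ∈ e := by
  induction h with
  | single h => exact h.1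
  | tail _ h ih => exact he _ _ _ ih h.1

/-- Key lemma: if there is an `(e \ a)`-chain from `x` to `z`, and `x ⊴ y ⊴ z`
with `(x,z) ∈ e`, then there is one from `x` to `y` or from `y` to `z`. -/
private lemma key {E : Type*} {e a : Set (E × E)} (he : TransRel e) (hsf : SqFree e)
    (ha : TransRel a) {x z : E}
    (h : Relation.TransGen (fun u v => (u, v) ∈ e \ a) x z) :
    ∀ y : E, rle e x y → rle e y z → (x, z) ∈ e →
      Relation.TransGen (fun u v => (u, v) ∈ e \ a) x y ∨
      Relation.TransGen (fun u v => (u, v) ∈ e \ a) y z := by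
  induction h using Relation.TransGen.head_induction_on with
  | single hxz =>
    rename_i x'
    intro y hxy hyz _
    rcases hxy with hxy | rfl
    · rcases hyz with hyz | rfl
      · by_cases h1 : (x', y) ∈ a
        · by_cases h2 : (y, z) ∈ a
          · exact absurd (ha _ _ _ h1 h2) hxz.2
          · exact Or.inr (Relation.TransGen.single ⟨hyz, h2⟩)
        · exact Or.inl (Relation.TransGen.single ⟨hxy, h1⟩)
      · exact Or.inl (Relation.TransGen.single hxz)
    · exact Or.inr (Relation.TransGen.single hxz)
  | head hxb hbz ih =>
    rename_i x' b
    intro y hxy hyz hxz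
    have hbe : (b, z) ∈ e := tg_mem he hbz
    have hcomp := hsf x' z b y hxz (Or.inl hxb.1) (Or.inl hbe) hxy hyz
    rcases hcomp with hby | hyb
    · rcases hby with hby | rfl
      · -- b ◁ y, use IH
        rcases ih y (Or.inl hby) hyz hbe with h1 | h2
        · exact Or.inl (Relation.TransGen.head hxb h1)
        · exact Or.inr h2
      · exact Or.inl (Relation.TransGen.single hxb)
    · -- y ⊴ b
      rcases hxy with hxy | rfl
      · rcases hyb with hyb | rfl
        · by_cases h1 : (x', y) ∈ a
          · by_cases h2 : (y, b) ∈ a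
            · exact absurd (ha _ _ _ h1 h2) hxb.2
            · exact Or.inr ((Relation.TransGen.single ⟨hyb, h2⟩).trans hbz)
          · exact Or.inl (Relation.TransGen.single ⟨hxy, h1⟩)
        · exact Or.inl (Relation.TransGen.single hxb)
      · exact Or.inr (Relation.TransGen.head hxb hbz)

private lemma int_closed {E : Type*} {e : Set (E × E)} (he : TransRel e) (hsf : SqFree e)
    {a : Set (E × E)} (ha : IsClosedIn e a) : IsClosedIn e (tint e a) := by
  refine ⟨Set.diff_subset, ?_⟩
  intro x y z hxy hyz
  have hxz : (x, z) ∈ e := he _ _ _ hxy.1 hyz.1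
  refine ⟨hxz, fun hcl => ?_⟩
  rcases key he hsf ha.2 hcl y (Or.inl hxy.1) (Or.inl hyz.1) hxz with h | h
  · exact hxy.2 h
  · exact hyz.2 h

/-- if `e` is square-free, then the interior of every closed subset of `e` is
closed, and the transitive closure of every open subset of `e` is open. -/
theorem squareFree_int_closed_cl_open {E : Type*} (e : Set (E × E)) (he : TransRel e)
    (hsf : SqFree e) :
    (∀ a : Set (E × E), IsClosedIn e a → IsClosedIn e (tint e a)) ∧
    (∀ a : Set (E × E), IsOpenIn e a → IsOpenIn e (tcl a)) := by
  constructor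
  · intro a ha
    exact int_closed he hsf ha
  · intro a ha
    have hsub : tcl a ⊆ e := by
      have : ∀ x y : E, Relation.TransGen (fun u v => (u, v) ∈ a) x y → (x, y) ∈ e := by
        intro x y h
        induction h with
        | single h => exact ha.1 h
        | tail _ h ih => exact he _ _ _ ih (ha.1 h)
      exact fun p hp => this p.1 p.2 hp
    have hcompl : e \ tcl a = tint e (e \ a) := by
      unfold tint
      rw [Set.diff_diff_cancel_left ha.1]
    have := int_closed he hsf (a := e \ a) ⟨Set.diff_subset, ha.2⟩
    refine ⟨hsub, ?_⟩
    rw [hcompl]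
    exact this.2
end
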